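/- arXiv:1908.08491 — 10 statements merged into one kernel-verified Lean document; each statement's English description precedes it below -/
import Mathlib

section
/- Let l ≥ 1 and let M₁(λ) be the l×l matrix with diagonal entries M₁(λ)_{j,j} = λ - (j-1)(l-j+1) for j = 1,…,l, superdiagonal entries M₁(λ)_{j,j+1} = -jλ, subdiagonal entries M₁(λ)_{j+1,j} = l-j, and all other entries zero. Then det M₁(λ) = λ^l. -/
/-- det of the tridiagonal matrix M₁(λ) equals λ^l. -/
theorem stmt0 (l : ℕ) (hl : 1 ≤ l) (lam : ℂ) :
    (Matrix.of fun i j : Fin l =>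
      if (i : ℕ) = (j : ℕ) then lam - (((i : ℕ) * (l - (i : ℕ)) : ℕ) : ℂ)
      else if (i : ℕ) + 1 = (j : ℕ) then -((((i : ℕ) + 1 : ℕ)) : ℂ) * lam
      else if (j : ℕ) + 1 = (i : ℕ) then (((l - (i : ℕ) : ℕ)) : ℂ)
      else 0).det = lam ^ l := by
  classical
  rcases eq_or_ne lam 0 with h0 | h0
  · subst h0
    rw [Matrix.det_of_lowerTriangular]
    · rw [zero_pow (by omega : l ≠ 0)]
      apply Finset.prod_eq_zero (Finset.mem_univ (⟨0, hl⟩ : Fin l))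
      simp
    · intro i j hij
      have hij' : (i : ℕ) < (j : ℕ) := hij
      simp only [Matrix.of_apply]
      split_ifs <;> first | (exfalso; omega) | ring
  · set M : Matrix (Fin l) (Fin l) ℂ := Matrix.of fun i j : Fin l =>
      if (i : ℕ) = (j : ℕ) then lam - (((i : ℕ) * (l - (i : ℕ)) : ℕ) : ℂ)
      else if (i : ℕ) + 1 = (j : ℕ) then -((((i : ℕ) + 1 : ℕ)) : ℂ) * lam
      else if (j : ℕ) + 1 = (i : ℕ) then (((l - (i : ℕ) : ℕ)) : ℂ)
      else 0 with hM
    set L : Matrix (Fin l) (Fin l) ℂ := Matrix.of fun i k : Fin l =>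
      if (i : ℕ) = (k : ℕ) then 1
      else if (k : ℕ) + 1 = (i : ℕ) then ((l - (i : ℕ) : ℕ) : ℂ) * lam⁻¹
      else 0 with hL
    set U : Matrix (Fin l) (Fin l) ℂ := Matrix.of fun k j : Fin l =>
      if (k : ℕ) = (j : ℕ) then lam
      else if (k : ℕ) + 1 = (j : ℕ) then -((((k : ℕ) + 1 : ℕ)) : ℂ) * lam
      else 0 with hU
    have hMLU : M = L * U := by
      ext i j
      rw [Matrix.mul_apply]
      rcases Nat.eq_zero_or_pos (i : ℕ) with hi | hi
      · rw [Finset.sum_eq_single i]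
        · simp only [hL, hM, hU, Matrix.of_apply, if_pos rfl, one_mul]
          split_ifs <;> first | (exfalso; omega) | (push_cast; try ring)
          · rw [show (i : ℕ) = 0 from hi]
            push_cast
            ring
        · intro k _ hk
          have h1 : ¬ ((i : ℕ) = (k : ℕ)) := fun h => hk (Fin.ext h.symm)
          simp only [hL, Matrix.of_apply, if_neg h1,
            if_neg (by omega : ¬((k : ℕ) + 1 = (i : ℕ)))]
          ring
        · simp
      · have hk0 : (i : ℕ) - 1 < l := by omega
        set k₀ : Fin l := ⟨(i : ℕ) - 1, hk0⟩ with hk₀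
        have hk₀v : (k₀ : ℕ) = (i : ℕ) - 1 := rfl
        have hne : i ≠ k₀ := by
          intro h
          have := congrArg Fin.val h
          rw [hk₀v] at this
          omega
        have hsum : ∑ k, L i k * U k j = L i i * U i j + L i k₀ * U k₀ j := by
          rw [← Finset.sum_pair (f := fun k => L i k * U k j) hne]
          symm
          apply Finset.sum_subset (Finset.subset_univ _)
          intro k _ hk
          simp only [Finset.mem_insert, Finset.mem_singleton, not_or] at hk
          have h1 : ¬ ((i : ℕ) = (k : ℕ)) := fun h => hk.1 (Fin.ext h.symm)
          have h2 : ¬ ((k : ℕ) + 1 = (i : ℕ)) := by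
            intro h
            apply hk.2
            apply Fin.ext
            rw [hk₀v]
            omega
          simp only [hL, Matrix.of_apply, if_neg h1, if_neg h2]
          ring
        rw [hsum]
        have hle1 : (i : ℕ) ≤ l := le_of_lt i.isLt
        have hle2 : 1 ≤ (i : ℕ) := hi
        simp only [hL, hM, hU, Matrix.of_apply, hk₀v, if_true]
        split_ifs <;>
          first
            | (exfalso; omega)
            | (push_cast [Nat.cast_sub hle1, Nat.cast_sub hle2]
               field_simp
               try ring)
    have hdetL : L.det = 1 := by
      rw [Matrix.det_of_lowerTriangular]
      · apply Finset.prod_eq_one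
        intro i _
        simp [hL]
      · intro i j hij
        have hij' : (i : ℕ) < (j : ℕ) := hij
        simp only [hL, Matrix.of_apply]
        rw [if_neg (by omega), if_neg (by omega)]
    have hdetU : U.det = lam ^ l := by
      rw [Matrix.det_of_upperTriangular]
      · simp [hU]
      · intro i j hij
        have hij' : (j : ℕ) < (i : ℕ) := hij
        simp only [hU, Matrix.of_apply]
        rw [if_neg (by omega), if_neg (by omega)]
    rw [hMLU, Matrix.det_mul, hdetL, hdetU, one_mul]
end

section
/- Let l ≥ 2 and let T(λ,μ) be the l×l tridiagonal matrix with all diagonal entries equal to λ, superdiagonal entries T_{j,j+1} = jμ for j = 1,…,l-1, and subdiagonal entries T_{j+1,j} = (l-j)μ. Then det T(λ,μ) = (λ-(l-1)μ)(λ-(l-3)μ)⋯(λ+(l-1)μ) = ∏_{k=0}^{l-1}(λ - (l-1-2k)μ). -/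
open Polynomial Finset

/-- auxiliary: derivative identity for `(1+X)^a`. -/
private lemma stmt2_d1 (a : ℕ) :
    derivative ((1+X)^a : ℂ[X]) * (1+X) = C (a:ℂ) * (1+X)^a := by
  rcases a with _ | a
  · simp
  · rw [derivative_pow]
    simp only [derivative_add, derivative_one, derivative_X, zero_add, mul_one,
      Nat.add_sub_cancel]
    rw [mul_assoc, ← pow_succ]

private lemma stmt2_d2 (k : ℕ) :
    derivative ((1-X)^k : ℂ[X]) * (1-X) = - C (k:ℂ) * (1-X)^k := by
  rcases k with _ | k
  · simp
  · rw [derivative_pow]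
    simp only [derivative_sub, derivative_one, derivative_X, zero_sub,
      Nat.add_sub_cancel]
    rw [pow_succ]
    ring

/-- `(1-X²)·g' = (a-k)·g - (a+k)·X·g` for `g = (1+X)^a (1-X)^k`. -/
private lemma stmt2_g_deriv (a k : ℕ) :
    (1 - X^2) * derivative ((1+X)^a * (1-X)^k : ℂ[X])
      = C ((a:ℂ) - k) * ((1+X)^a * (1-X)^k)
        - C ((a:ℂ) + k) * (X * ((1+X)^a * (1-X)^k)) := by
  have h1 := stmt2_d1 a
  have h2 := stmt2_d2 k
  rw [derivative_mul]
  simp only [C_add, C_sub]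
  linear_combination ((1-X : ℂ[X])^k * (1-X)) * h1 + ((1+X : ℂ[X])^a * (1+X)) * h2

private lemma stmt2_rel0 (a k : ℕ) :
    ((1+X)^a*(1-X)^k : ℂ[X]).coeff 1
      = ((a:ℂ)-(k:ℂ)) * ((1+X)^a*(1-X)^k : ℂ[X]).coeff 0 := by
  have h := congrArg (fun p => Polynomial.coeff p 0) (stmt2_g_deriv a k)
  set G := ((1+X)^a*(1-X)^k : ℂ[X]) with hG
  simp only [sub_mul, one_mul, coeff_sub, coeff_C_mul, coeff_derivative,
    coeff_X_mul_zero, coeff_mul_X_zero, mul_zero, sub_zero, Nat.cast_zero, zero_add,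
    mul_one] at h
  have h2 : (X^2 * derivative G).coeff 0 = 0 := by
    rw [pow_two, mul_assoc, coeff_X_mul_zero]
  rw [h2] at h
  linear_combination h

private lemma stmt2_coeff_sq_mul (p : ℂ[X]) (j : ℕ) :
    (X^2 * p).coeff (j+1) = (X * p).coeff j := by
  rw [pow_two, mul_assoc, coeff_X_mul]

private lemma stmt2_relS (a k j : ℕ) :
    ((j:ℂ)+2) * ((1+X)^a*(1-X)^k : ℂ[X]).coeff (j+2)
      + (((a:ℂ)+(k:ℂ)) - j) * ((1+X)^a*(1-X)^k : ℂ[X]).coeff j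
    = ((a:ℂ)-(k:ℂ)) * ((1+X)^a*(1-X)^k : ℂ[X]).coeff (j+1) := by
  have h := congrArg (fun p => Polynomial.coeff p (j+1)) (stmt2_g_deriv a k)
  set G := ((1+X)^a*(1-X)^k : ℂ[X]) with hG
  simp only [sub_mul, one_mul, coeff_sub, coeff_C_mul, coeff_derivative,
    coeff_X_mul, stmt2_coeff_sq_mul] at h
  rcases j with _ | j
  · rw [coeff_X_mul_zero] at h
    push_cast at h ⊢
    linear_combination h
  · rw [coeff_X_mul, coeff_derivative] at h
    push_cast at h ⊢
    linear_combination h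

private lemma stmt2_deg (a k : ℕ) :
    ((1+X : ℂ[X])^a * (1-X)^k).natDegree ≤ a + k := by
  refine le_trans (natDegree_mul_le) ?_
  have h1 : ((1+X : ℂ[X])^a).natDegree ≤ a := by
    refine le_trans (natDegree_pow_le) ?_
    have : (1 + X : ℂ[X]).natDegree ≤ 1 := by
      refine le_trans (natDegree_add_le _ _) ?_
      simp
    nlinarith [this]
  have h2 : ((1-X : ℂ[X])^k).natDegree ≤ k := by
    refine le_trans (natDegree_pow_le) ?_
    have : (1 - X : ℂ[X]).natDegree ≤ 1 := by
      refine le_trans (natDegree_sub_le _ _) ?_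
      simp
    nlinarith [this]
  omega

/-- the substitution operator in coefficient form. -/
noncomputable def stmt2Phi (p : ℕ) (f : ℂ[X]) : ℂ[X] :=
  ∑ k ∈ Finset.range (p+1), C (f.coeff k) * ((1+X)^(p-k) * (1-X)^k)

private lemma stmt2_Phi_step (c : ℂ) (p : ℕ) (f : ℂ[X]) (hf : f.natDegree ≤ p) :
    stmt2Phi (p+1) ((1 + C c * X) * f) = ((1+X) + C c * (1-X)) * stmt2Phi p f := by
  have hcoeff : ∀ k, ((1 + C c * X) * f).coeff k
      = f.coeff k + c * (X * f).coeff k := by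
    intro k
    have : (1 + C c * X) * f = f + C c * (X * f) := by ring
    rw [this, coeff_add, coeff_C_mul]
  have hsplit : stmt2Phi (p+1) ((1 + C c * X) * f)
      = (∑ k ∈ Finset.range (p+2), C (f.coeff k) * ((1+X)^(p+1-k) * (1-X)^k))
        + C c * ∑ k ∈ Finset.range (p+2), C ((X*f).coeff k) * ((1+X)^(p+1-k) * (1-X)^k) := by
    rw [stmt2Phi, Finset.mul_sum, ← Finset.sum_add_distrib]
    refine Finset.sum_congr rfl fun k _ => ?_
    rw [hcoeff k, C_add, C_mul]
    ring
  have hS1 : (∑ k ∈ Finset.range (p+2), C (f.coeff k) * ((1+X)^(p+1-k) * (1-X)^k))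
      = (1+X) * stmt2Phi p f := by
    rw [show p+2 = (p+1)+1 from rfl, Finset.sum_range_succ,
      coeff_eq_zero_of_natDegree_lt (lt_of_le_of_lt hf (Nat.lt_succ_self p)), C_0,
      zero_mul, add_zero, stmt2Phi, Finset.mul_sum]
    refine Finset.sum_congr rfl fun k hk => ?_
    rw [Nat.succ_sub (Finset.mem_range_succ_iff.mp hk), pow_succ]
    ring
  have hS2 : (∑ k ∈ Finset.range (p+2), C ((X*f).coeff k) * ((1+X)^(p+1-k) * (1-X)^k))
      = (1-X) * stmt2Phi p f := by
    rw [Finset.sum_range_succ', coeff_X_mul_zero, C_0, zero_mul, add_zero, stmt2Phi,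
      Finset.mul_sum]
    refine Finset.sum_congr rfl fun k hk => ?_
    rw [coeff_X_mul, show p+1-(k+1) = p-k from by omega, pow_succ]
    ring
  rw [hsplit, hS1, hS2]
  ring

private lemma stmt2_Phi_g (a m : ℕ) :
    stmt2Phi (a+m) ((1+X)^a * (1-X)^m : ℂ[X]) = 2^a * (2*X)^m := by
  induction a with
  | zero =>
    induction m with
    | zero => simp [stmt2Phi]
    | succ m ih =>
      have hd : ((1-X : ℂ[X])^m).natDegree ≤ m := by
        have := stmt2_deg 0 m
        simpa using this
      have h := stmt2_Phi_step (-1) m ((1-X : ℂ[X])^m) hd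
      have e1 : (1 + C (-1 : ℂ) * X) * (1-X : ℂ[X])^m = (1+X)^0 * (1-X)^(m+1) := by
        rw [pow_succ]; simp [map_neg]; ring
      have e2 : ((1+X) + C (-1:ℂ) * (1-X)) = 2 * X := by
        simp [map_neg]; ring
      rw [e1, e2] at h
      simp only [pow_zero, one_mul, Nat.zero_add] at ih h ⊢
      rw [h, ih, pow_succ]
      ring
  | succ a ih =>
    have hd : ((1+X : ℂ[X])^a * (1-X)^m).natDegree ≤ a + m := stmt2_deg a m
    have h := stmt2_Phi_step 1 (a+m) ((1+X : ℂ[X])^a * (1-X)^m) hd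
    have e1 : (1 + C (1 : ℂ) * X) * ((1+X : ℂ[X])^a * (1-X)^m)
        = (1+X)^(a+1) * (1-X)^m := by
      rw [pow_succ]; simp; ring
    have e2 : ((1+X) + C (1:ℂ) * (1-X)) = (2 : ℂ[X]) := by
      simp; ring
    rw [e1, e2] at h
    rw [show a+1+m = (a+m)+1 from by omega, h, ih, pow_succ]
    ring

private lemma stmt2_row_sum (l j : ℕ) (hj : j < l) (lam mu : ℂ) (q : ℕ → ℂ)
    (hq : q l = 0) :
    ∑ m ∈ Finset.range l,
      (if j = m then lam
       else if j + 1 = m then ((j + 1 : ℕ) : ℂ) * mu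
       else if m + 1 = j then ((l - j : ℕ) : ℂ) * mu
       else 0) * q m
    = lam * q j + ((j + 1 : ℕ) : ℂ) * mu * q (j+1)
      + (if j = 0 then 0 else ((l - j : ℕ) : ℂ) * mu * q (j-1)) := by
  have split : ∀ m, (if j = m then lam
       else if j + 1 = m then ((j + 1 : ℕ) : ℂ) * mu
       else if m + 1 = j then ((l - j : ℕ) : ℂ) * mu
       else 0) * q m
      = (if j = m then lam * q m else 0)
        + (if j + 1 = m then ((j + 1 : ℕ) : ℂ) * mu * q m else 0)
        + (if m + 1 = j then ((l - j : ℕ) : ℂ) * mu * q m else 0) := by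
    intro m
    split_ifs <;> first | (exfalso; omega) | ring
  rw [Finset.sum_congr rfl (fun m _ => split m), Finset.sum_add_distrib,
    Finset.sum_add_distrib]
  have h1 : (∑ m ∈ Finset.range l, if j = m then lam * q m else 0) = lam * q j := by
    rw [Finset.sum_ite_eq]
    simp [Finset.mem_range.mpr hj]
  have h2 : (∑ m ∈ Finset.range l, if j + 1 = m then ((j + 1 : ℕ) : ℂ) * mu * q m else 0)
      = ((j + 1 : ℕ) : ℂ) * mu * q (j+1) := by
    rw [Finset.sum_ite_eq]
    by_cases hb : j + 1 < l
    · simp [Finset.mem_range.mpr hb]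
    · have hl : j + 1 = l := by omega
      simp [Finset.mem_range, hb, hl, hq]
  have h3 : (∑ m ∈ Finset.range l, if m + 1 = j then ((l - j : ℕ) : ℂ) * mu * q m else 0)
      = (if j = 0 then 0 else ((l - j : ℕ) : ℂ) * mu * q (j-1)) := by
    rcases j with _ | j'
    · simp
    · have : ∀ m, (m + 1 = j' + 1) = (m = j') := by intro m; simp
      simp only [this]
      rw [Finset.sum_ite_eq']
      simp [Finset.mem_range.mpr (by omega : j' < l)]
  rw [h1, h2, h3]

/-- determinant of the tridiagonal matrix T(λ,μ) with λ on the diagonal,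
jμ above and (l-j)μ below equals ∏_{k=0}^{l-1} (λ - (l-1-2k)μ). -/
theorem stmt2 (l : ℕ) (hl : 2 ≤ l) (lam mu : ℂ) :
    (Matrix.of fun i j : Fin l =>
      if (i : ℕ) = (j : ℕ) then lam
      else if (i : ℕ) + 1 = (j : ℕ) then (((i : ℕ) + 1 : ℕ) : ℂ) * mu
      else if (j : ℕ) + 1 = (i : ℕ) then (((l - (i : ℕ) : ℕ)) : ℂ) * mu
      else 0).det
    = ∏ k ∈ Finset.range l, (lam - ((l : ℂ) - 1 - 2 * (k : ℕ)) * mu) := by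
  obtain ⟨n, rfl⟩ : ∃ n, l = n + 1 := ⟨l - 1, by omega⟩
  set T : Matrix (Fin (n+1)) (Fin (n+1)) ℂ := Matrix.of fun i j : Fin (n+1) =>
      if (i : ℕ) = (j : ℕ) then lam
      else if (i : ℕ) + 1 = (j : ℕ) then (((i : ℕ) + 1 : ℕ) : ℂ) * mu
      else if (j : ℕ) + 1 = (i : ℕ) then (((n + 1 - (i : ℕ) : ℕ)) : ℂ) * mu
      else 0 with hT
  set P : Matrix (Fin (n+1)) (Fin (n+1)) ℂ := Matrix.of fun j k : Fin (n+1) =>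
      ((1+X)^(n-(k:ℕ)) * (1-X)^(k:ℕ) : ℂ[X]).coeff (j:ℕ) with hP
  set d : Fin (n+1) → ℂ := fun k => lam + ((n:ℂ) - 2*(k:ℕ)) * mu with hd
  have hvanish : ∀ k : ℕ, k ≤ n → ((1+X)^(n-k) * (1-X)^k : ℂ[X]).coeff (n+1) = 0 := by
    intro k hk
    apply coeff_eq_zero_of_natDegree_lt
    have := stmt2_deg (n-k) k
    omega
  -- eigenrelation
  have key : T * P = P * Matrix.diagonal d := by
    ext j k
    rw [Matrix.mul_apply, Matrix.mul_diagonal]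
    have hkn : (k:ℕ) ≤ n := Nat.lt_succ_iff.mp k.isLt
    have hacast : (((n - (k:ℕ) : ℕ)) : ℂ) = (n:ℂ) - (k:ℕ) := by
      push_cast [Nat.cast_sub hkn]; ring
    set q : ℕ → ℂ := fun m => ((1+X)^(n-(k:ℕ)) * (1-X)^(k:ℕ) : ℂ[X]).coeff m with hq
    have hstep : ∀ i : Fin (n+1), T j i * P i k
        = (if (j:ℕ) = (i:ℕ) then lam
           else if (j:ℕ) + 1 = (i:ℕ) then (((j:ℕ) + 1 : ℕ) : ℂ) * mu
           else if (i:ℕ) + 1 = (j:ℕ) then ((n + 1 - (j:ℕ) : ℕ) : ℂ) * mu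
           else 0) * q (i:ℕ) := fun i => rfl
    rw [Finset.sum_congr rfl (fun i _ => hstep i)]
    rw [Fin.sum_univ_eq_sum_range (fun m =>
        (if (j:ℕ) = m then lam
         else if (j:ℕ) + 1 = m then (((j:ℕ) + 1 : ℕ) : ℂ) * mu
         else if m + 1 = (j:ℕ) then ((n + 1 - (j:ℕ) : ℕ) : ℂ) * mu
         else 0) * q m) (n+1)]
    rw [stmt2_row_sum (n+1) (j:ℕ) j.isLt lam mu q (hvanish (k:ℕ) hkn)]
    have hPjk : P j k = q (j:ℕ) := rfl
    rw [hPjk, hd]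
    rcases hj : (j:ℕ) with _ | j'
    · have h0 := stmt2_rel0 (n - (k:ℕ)) (k:ℕ)
      rw [hacast] at h0
      simp only [if_pos rfl]
      push_cast
      simp only [hq]
      linear_combination mu * h0
    · have hj'n : j' < n := by have := j.isLt; omega
      have hrel := stmt2_relS (n - (k:ℕ)) (k:ℕ) j'
      rw [hacast] at hrel
      have hlj : ((n + 1 - (j'+1) : ℕ) : ℂ) = (n:ℂ) - (j':ℕ) := by
        rw [show n + 1 - (j'+1) = n - j' from by omega]
        push_cast [Nat.cast_sub (le_of_lt hj'n)]; ring
      simp only [if_neg (Nat.succ_ne_zero j')]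
      rw [hlj]
      push_cast
      simp only [hq, show j'+1+1 = j'+2 from rfl, show j'+1-1 = j' from rfl]
      linear_combination mu * hrel
  -- P·P = 2^n
  have hPP : P * P = (2^n : ℂ) • (1 : Matrix (Fin (n+1)) (Fin (n+1)) ℂ) := by
    ext j m
    rw [Matrix.mul_apply]
    have hmn : (m:ℕ) ≤ n := Nat.lt_succ_iff.mp m.isLt
    have hsum : ∑ i : Fin (n+1), P j i * P i m
        = (stmt2Phi n ((1+X)^(n-(m:ℕ)) * (1-X)^(m:ℕ))).coeff (j:ℕ) := by
      have hstep2 : ∀ i : Fin (n+1), P j i * P i m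
          = (fun c => ((1+X)^(n-c) * (1-X)^c : ℂ[X]).coeff (j:ℕ)
              * ((1+X)^(n-(m:ℕ)) * (1-X)^(m:ℕ) : ℂ[X]).coeff c) (i:ℕ) := fun i => rfl
      rw [Finset.sum_congr rfl (fun i _ => hstep2 i),
        Fin.sum_univ_eq_sum_range (fun c =>
          ((1+X)^(n-c) * (1-X)^c : ℂ[X]).coeff (j:ℕ)
            * ((1+X)^(n-(m:ℕ)) * (1-X)^(m:ℕ) : ℂ[X]).coeff c) (n+1),
        stmt2Phi, finset_sum_coeff]
      refine Finset.sum_congr rfl fun c _ => ?_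
      rw [coeff_C_mul]
      ring
    have hphi := stmt2_Phi_g (n - (m:ℕ)) (m:ℕ)
    rw [show (n - (m:ℕ)) + (m:ℕ) = n from by omega] at hphi
    have hform : (2:ℂ[X])^(n-(m:ℕ)) * (2*X)^(m:ℕ) = C ((2:ℂ)^n) * X^(m:ℕ) := by
      rw [mul_pow, ← mul_assoc, ← pow_add,
        show n-(m:ℕ)+(m:ℕ) = n from by omega, map_pow]
      rw [map_ofNat]
    rw [hsum, hphi, hform, coeff_C_mul, coeff_X_pow, Matrix.smul_apply,
      Matrix.one_apply]
    simp only [Fin.ext_iff]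
    split_ifs <;> simp
  -- nonvanishing determinant of P
  have hPdet : P.det * P.det = ((2:ℂ)^n)^(n+1) := by
    rw [← Matrix.det_mul, hPP, Matrix.det_smul, Matrix.det_one, mul_one,
      Fintype.card_fin]
  have hPne : P.det ≠ 0 := by
    intro h
    rw [h, mul_zero] at hPdet
    exact (pow_ne_zero (n+1) (pow_ne_zero n (two_ne_zero))) hPdet.symm
  -- conclude
  have hdet : T.det * P.det = P.det * ∏ k, d k := by
    rw [← Matrix.det_mul, key, Matrix.det_mul, Matrix.det_diagonal]
  have hTdet : T.det = ∏ k, d k := by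
    rw [mul_comm P.det] at hdet
    exact mul_right_cancel₀ hPne hdet
  rw [hTdet]
  rw [Fin.prod_univ_eq_prod_range (fun m => lam + ((n:ℂ) - 2*(m:ℕ)) * mu) (n+1)]
  rw [← Finset.prod_range_reflect (fun k => lam - (((n+1 : ℕ) : ℂ) - 1 - 2 * (k:ℕ)) * mu) (n+1)]
  refine Finset.prod_congr rfl fun j hj => ?_
  have hjn : j ≤ n := by simpa [Nat.lt_succ_iff] using Finset.mem_range.mp hj
  rw [show n + 1 - 1 - j = n - j from by omega]
  push_cast [Nat.cast_sub hjn]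
  ring
end

section
/- Let l ≥ 1 and let H_l(μ) be the l×l matrix with entries H_{j,j} = (1-j)(l-j+1), H_{j,j+1} = μj, H_{j,j-1} = μ(l-j+1), and zero otherwise. Then det(H_l(μ) + λ·Id), viewed as a polynomial in λ and μ, is a polynomial in λ and μ² of total degree l in (λ, μ²). -/
open MvPolynomial Matrix

private noncomputable def Hmat (l : ℕ) : Matrix (Fin l) (Fin l) (MvPolynomial (Fin 2) ℂ) :=
  Matrix.of fun i j : Fin l =>
    (if (i : ℕ) = (j : ℕ) then X 0 - C (((i : ℕ) * (l - (i : ℕ)) : ℕ) : ℂ)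
    else if (i : ℕ) + 1 = (j : ℕ) then X 1 * C ((((i : ℕ) + 1 : ℕ)) : ℂ)
    else if (j : ℕ) + 1 = (i : ℕ) then X 1 * C (((l - (i : ℕ) : ℕ)) : ℂ)
    else 0 : MvPolynomial (Fin 2) ℂ)

private lemma aeval_monomial_two {A : Type*} [CommRing A] [Algebra ℂ A]
    (f : Fin 2 → A) (m : Fin 2 →₀ ℕ) (c : ℂ) :
    aeval f (monomial m c) = algebraMap ℂ A c * f 0 ^ m 0 * f 1 ^ m 1 := by
  rw [aeval_monomial, Finsupp.prod_fintype _ _ (fun i => pow_zero _), Fin.prod_univ_two,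
    mul_assoc]

private lemma monomial_two (m : Fin 2 →₀ ℕ) (c : ℂ) :
    monomial m c = C c * X 0 ^ m 0 * X 1 ^ m 1 := by
  have := aeval_monomial_two (A := MvPolynomial (Fin 2) ℂ) X m c
  simpa [aeval_X_left_apply, algebraMap_eq] using this

private lemma finsupp_two_ext (m n : Fin 2 →₀ ℕ) (h0 : m 0 = n 0) (h1 : m 1 = n 1) : m = n := by
  ext i
  fin_cases i <;> assumption

/-! ### The sign-flip automorphism ν : μ ↦ -μ -/

private noncomputable def nu : MvPolynomial (Fin 2) ℂ →ₐ[ℂ] MvPolynomial (Fin 2) ℂ :=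
  aeval ![X 0, -X 1]

private lemma nu_X0 : nu (X 0) = X 0 := by simp [nu]
private lemma nu_X1 : nu (X 1) = -X 1 := by simp [nu]
private lemma nu_C (c : ℂ) : nu (C c) = C c := by simp [nu, algebraMap_eq]

private lemma nu_monomial (m : Fin 2 →₀ ℕ) (c : ℂ) :
    nu (monomial m c) = ((-1 : ℂ) ^ (m 1)) • monomial m c := by
  rw [nu, aeval_monomial_two, monomial_two]
  have h0 : (![X 0, -X 1] : Fin 2 → MvPolynomial (Fin 2) ℂ) 0 = X 0 := rfl
  have h1 : (![X 0, -X 1] : Fin 2 → MvPolynomial (Fin 2) ℂ) 1 = -X 1 := rfl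
  rw [h0, h1, neg_pow, algebraMap_eq, smul_eq_C_mul]
  simp only [map_pow, map_neg, C_1]
  ring

private lemma coeff_nu (p : MvPolynomial (Fin 2) ℂ) (m : Fin 2 →₀ ℕ) :
    coeff m (nu p) = (-1 : ℂ) ^ (m 1) * coeff m p := by
  conv_lhs => rw [p.as_sum, map_sum]
  rw [Finset.sum_congr rfl (fun n _ => by rw [nu_monomial]), coeff_sum]
  simp_rw [coeff_smul, coeff_monomial, smul_ite, smul_eq_mul, mul_zero]
  rw [Finset.sum_ite_eq' p.support m (fun n => (-1 : ℂ) ^ (n 1) * coeff n p)]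
  by_cases h : m ∈ p.support
  · rw [if_pos h]
  · rw [if_neg h, MvPolynomial.notMem_support_iff.mp h, mul_zero]

private lemma nu_det (l : ℕ) : nu (Hmat l).det = (Hmat l).det := by
  set d : Fin l → MvPolynomial (Fin 2) ℂ := fun i => C ((-1 : ℂ) ^ (i : ℕ)) with hd
  have hsq : ∀ i : Fin l, d i * d i = 1 := by
    intro i
    rw [hd, ← C_mul, ← mul_pow]
    norm_num
  have hodd : ∀ i j : Fin l, (i : ℕ) + 1 = (j : ℕ) ∨ (j : ℕ) + 1 = (i : ℕ) →
      d i * d j = -1 := by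
    intro i j hij
    have : Odd ((i : ℕ) + (j : ℕ)) := by
      rcases hij with h | h
      · exact ⟨(i : ℕ), by omega⟩
      · exact ⟨(j : ℕ), by omega⟩
    rw [hd, ← C_mul, ← pow_add, Odd.neg_one_pow this]
    simp
  have key : (nu : MvPolynomial (Fin 2) ℂ →+* MvPolynomial (Fin 2) ℂ).mapMatrix (Hmat l)
      = diagonal d * Hmat l * diagonal d := by
    refine Matrix.ext fun i j => ?_
    simp only [RingHom.mapMatrix_apply, Matrix.map_apply, mul_diagonal, diagonal_mul]
    show nu (Hmat l i j) = d i * Hmat l i j * d j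
    by_cases hij : (i : ℕ) = (j : ℕ)
    · have hij' : i = j := Fin.ext hij
      subst hij'
      have e : Hmat l i i = X 0 - C (((i : ℕ) * (l - (i : ℕ)) : ℕ) : ℂ) := by
        simp only [Hmat, of_apply, if_true]
      rw [e, map_sub, nu_X0, nu_C]
      linear_combination (-(X 0 - C (((i : ℕ) * (l - (i : ℕ)) : ℕ) : ℂ))) * (hsq i)
    · by_cases h1 : (i : ℕ) + 1 = (j : ℕ)
      · have e : Hmat l i j = X 1 * C ((((i : ℕ) + 1 : ℕ)) : ℂ) := by
          simp only [Hmat, of_apply]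
          rw [if_neg hij, if_pos h1]
        rw [e, _root_.map_mul, nu_X1, nu_C]
        linear_combination (- X 1 * C ((((i : ℕ) + 1 : ℕ)) : ℂ)) * (hodd i j (Or.inl h1))
      · by_cases h2 : (j : ℕ) + 1 = (i : ℕ)
        · have e : Hmat l i j = X 1 * C (((l - (i : ℕ) : ℕ)) : ℂ) := by
            simp only [Hmat, of_apply]
            rw [if_neg hij, if_neg h1, if_pos h2]
          rw [e, _root_.map_mul, nu_X1, nu_C]
          linear_combination (- X 1 * C (((l - (i : ℕ) : ℕ)) : ℂ)) * (hodd i j (Or.inr h2))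
        · have e : Hmat l i j = 0 := by
            simp only [Hmat, of_apply]
            rw [if_neg hij, if_neg h1, if_neg h2]
          rw [e]
          simp
  have h := RingHom.map_det (nu : MvPolynomial (Fin 2) ℂ →+* MvPolynomial (Fin 2) ℂ) (Hmat l)
  rw [show nu (Hmat l).det = (nu : MvPolynomial (Fin 2) ℂ →+* MvPolynomial (Fin 2) ℂ) (Hmat l).det from rfl,
    h, key, det_mul, det_mul, det_diagonal]
  have hdd : (∏ i : Fin l, d i) * (∏ i : Fin l, d i) = 1 := by
    rw [← Finset.prod_mul_distrib, Finset.prod_eq_one]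
    exact fun i _ => hsq i
  calc (∏ i : Fin l, d i) * (Hmat l).det * (∏ i : Fin l, d i)
      = (∏ i : Fin l, d i) * (∏ i : Fin l, d i) * (Hmat l).det := by ring
    _ = (Hmat l).det := by rw [hdd, one_mul]

private lemma even_support (l : ℕ) (m : Fin 2 →₀ ℕ) (hm : m ∈ (Hmat l).det.support) :
    Even (m 1) := by
  by_contra hodd
  rw [Nat.not_even_iff_odd] at hodd
  have h1 : coeff m (Hmat l).det = (-1 : ℂ) ^ (m 1) * coeff m (Hmat l).det := by
    conv_lhs => rw [← nu_det l]
    exact coeff_nu _ m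
  rw [Odd.neg_one_pow hodd, neg_one_mul] at h1
  have : coeff m (Hmat l).det = 0 := by
    have h2 : 2 * coeff m (Hmat l).det = 0 := by linear_combination h1
    have : (2 : ℂ) ≠ 0 := two_ne_zero
    exact (mul_eq_zero.mp h2).resolve_left this
  exact (MvPolynomial.mem_support_iff.mp hm) this

/-! ### Degree bound -/

private lemma Hmat_entry_deg (l : ℕ) (i j : Fin l) : (Hmat l i j).totalDegree ≤ 1 := by
  simp only [Hmat, of_apply]
  split_ifs with h1 h2 h3
  · rw [sub_eq_add_neg, ← C_neg]
    refine le_trans (totalDegree_add _ _) ?_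
    rw [totalDegree_X, totalDegree_C]
    norm_num
  · refine le_trans (totalDegree_mul _ _) ?_
    rw [totalDegree_X, totalDegree_C]
  · refine le_trans (totalDegree_mul _ _) ?_
    rw [totalDegree_X, totalDegree_C]
  · rw [totalDegree_zero]
    norm_num

private lemma Hdet_deg (l : ℕ) : (Hmat l).det.totalDegree ≤ l := by
  rw [det_apply']
  refine le_trans (totalDegree_finset_sum _ _) ?_
  refine Finset.sup_le fun σ _ => ?_
  refine le_trans (totalDegree_mul _ _) ?_
  rw [show (((Equiv.Perm.sign σ : ℤ) : MvPolynomial (Fin 2) ℂ)) = C ((Equiv.Perm.sign σ : ℤ) : ℂ) from rfl,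
    totalDegree_C]
  rw [zero_add]
  refine le_trans (totalDegree_finset_prod _ _) ?_
  calc ∑ i : Fin l, (Hmat l (σ i) i).totalDegree ≤ ∑ _i : Fin l, 1 :=
        Finset.sum_le_sum fun i _ => Hmat_entry_deg l (σ i) i
    _ = l := by simp

/-! ### The top coefficient -/

private noncomputable def psi : MvPolynomial (Fin 2) ℂ →ₐ[ℂ] Polynomial ℂ :=
  aeval ![Polynomial.X, 0]

private lemma coeff_psi (p : MvPolynomial (Fin 2) ℂ) (k : ℕ) :
    (psi p).coeff k = coeff (Finsupp.single 0 k) p := by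
  conv_lhs => rw [p.as_sum, map_sum, Polynomial.finset_sum_coeff]
  have step : ∀ m ∈ p.support, (psi (monomial m (coeff m p))).coeff k
      = if m = Finsupp.single 0 k then coeff m p else 0 := by
    intro m _
    rw [psi, aeval_monomial_two]
    have h0 : (![Polynomial.X, 0] : Fin 2 → Polynomial ℂ) 0 = Polynomial.X := rfl
    have h1 : (![Polynomial.X, 0] : Fin 2 → Polynomial ℂ) 1 = 0 := rfl
    rw [h0, h1, Polynomial.algebraMap_eq]
    by_cases hm1 : m 1 = 0
    · rw [hm1, pow_zero, mul_one, Polynomial.coeff_C_mul, Polynomial.coeff_X_pow]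
      by_cases hm0 : m 0 = k
      · rw [if_pos hm0.symm, if_pos (finsupp_two_ext _ _ (by simp [hm0]) (by simp [hm1])),
          mul_one]
      · rw [if_neg (fun h => hm0 h.symm), mul_zero,
          if_neg (fun h => hm0 (by rw [h]; simp))]
    · rw [zero_pow hm1, mul_zero, Polynomial.coeff_zero,
        if_neg (fun h => hm1 (by rw [h]; simp))]
  rw [Finset.sum_congr rfl step, Finset.sum_ite_eq' p.support _ (fun m => coeff m p)]
  by_cases h : Finsupp.single (0 : Fin 2) k ∈ p.support
  · rw [if_pos h]
  · rw [if_neg h, MvPolynomial.notMem_support_iff.mp h]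

private lemma coeff_top (l : ℕ) :
    coeff (Finsupp.single 0 l) (Hmat l).det = 1 := by
  rw [← coeff_psi]
  have key : psi (Hmat l).det
      = ∏ i : Fin l, (Polynomial.X - Polynomial.C (((i : ℕ) * (l - (i : ℕ)) : ℕ) : ℂ)) := by
    rw [show psi (Hmat l).det
        = (psi : MvPolynomial (Fin 2) ℂ →+* Polynomial ℂ) (Hmat l).det from rfl,
      RingHom.map_det]
    rw [show (psi : MvPolynomial (Fin 2) ℂ →+* Polynomial ℂ).mapMatrix (Hmat l)
        = diagonal (fun i : Fin l =>
            Polynomial.X - Polynomial.C (((i : ℕ) * (l - (i : ℕ)) : ℕ) : ℂ)) from ?_,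
      det_diagonal]
    refine Matrix.ext fun i j => ?_
    simp only [RingHom.mapMatrix_apply, Matrix.map_apply, diagonal]
    by_cases hij : i = j
    · subst hij
      simp only [Hmat, of_apply, if_true]
      rw [map_sub]
      congr 1
      · simp [psi]
      · simp [psi, algebraMap_eq]
    · have hij' : ¬ (i : ℕ) = (j : ℕ) := fun h => hij (Fin.ext h)
      rw [of_apply, if_neg hij]
      show psi (Hmat l i j) = 0
      simp only [Hmat, of_apply]
      rw [if_neg hij']
      split_ifs with h1 h2
      · rw [_root_.map_mul, show psi (X 1) = 0 from by simp [psi]]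
        ring
      · rw [_root_.map_mul, show psi (X 1) = 0 from by simp [psi]]
        ring
      · exact map_zero _
  rw [key]
  have hmonic : (∏ i : Fin l,
      (Polynomial.X - Polynomial.C (((i : ℕ) * (l - (i : ℕ)) : ℕ) : ℂ))).Monic :=
    Polynomial.monic_prod_of_monic _ _ fun i _ => Polynomial.monic_X_sub_C _
  have hdeg : (∏ i : Fin l,
      (Polynomial.X - Polynomial.C (((i : ℕ) * (l - (i : ℕ)) : ℕ) : ℂ))).natDegree = l := by
    rw [Polynomial.natDegree_prod_of_monic _ _ fun i _ => Polynomial.monic_X_sub_C _,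
      Finset.sum_congr rfl fun i _ => Polynomial.natDegree_X_sub_C _]
    simp
  have h := hmonic.coeff_natDegree
  rwa [hdeg] at h

/-! ### Building P -/

private noncomputable def gmap (m : Fin 2 →₀ ℕ) : Fin 2 →₀ ℕ :=
  Finsupp.single 0 (m 0) + Finsupp.single 1 (m 1 / 2)

private lemma gmap_apply0 (m : Fin 2 →₀ ℕ) : gmap m 0 = m 0 := by
  simp [gmap, Finsupp.single_apply]

private lemma gmap_apply1 (m : Fin 2 →₀ ℕ) : gmap m 1 = m 1 / 2 := by
  simp [gmap, Finsupp.single_apply]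

private lemma single_apply0 (k : ℕ) : (Finsupp.single (0 : Fin 2) k) 0 = k := by
  simp

private lemma single_apply1 (k : ℕ) : (Finsupp.single (0 : Fin 2) k) 1 = 0 := by
  simp [Finsupp.single_apply]

/-- det(H_l(μ) + λ·Id) is a polynomial in λ and μ² of total degree l
in (λ, μ²).  Here the variables are X 0 = λ and X 1 = μ in `MvPolynomial (Fin 2) ℂ`. -/
theorem stmt3 (l : ℕ) (hl : 1 ≤ l) :
    ∃ P : MvPolynomial (Fin 2) ℂ, P.totalDegree = l ∧
      (Matrix.of fun i j : Fin l =>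
        (if (i : ℕ) = (j : ℕ) then X 0 - C (((i : ℕ) * (l - (i : ℕ)) : ℕ) : ℂ)
        else if (i : ℕ) + 1 = (j : ℕ) then X 1 * C ((((i : ℕ) + 1 : ℕ)) : ℂ)
        else if (j : ℕ) + 1 = (i : ℕ) then X 1 * C (((l - (i : ℕ) : ℕ)) : ℂ)
        else 0 : MvPolynomial (Fin 2) ℂ)).det
      = aeval ![X 0, (X 1) ^ 2] P := by
  set D : MvPolynomial (Fin 2) ℂ := (Hmat l).det with hD
  set P : MvPolynomial (Fin 2) ℂ := ∑ m ∈ D.support, monomial (gmap m) (coeff m D) with hP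
  have heval : aeval ![X 0, (X 1) ^ 2] P = D := by
    rw [hP, map_sum]
    conv_rhs => rw [D.as_sum]
    refine Finset.sum_congr rfl fun m hm => ?_
    rw [aeval_monomial_two]
    have h0 : (![X 0, X 1 ^ 2] : Fin 2 → MvPolynomial (Fin 2) ℂ) 0 = X 0 := rfl
    have h1 : (![X 0, X 1 ^ 2] : Fin 2 → MvPolynomial (Fin 2) ℂ) 1 = X 1 ^ 2 := rfl
    rw [h0, h1, gmap_apply0, gmap_apply1, ← pow_mul,
      Nat.mul_div_cancel' (even_support l m hm).two_dvd, algebraMap_eq, ← monomial_two]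
  have hcoeffP : coeff (Finsupp.single 0 l) P = 1 := by
    rw [hP, coeff_sum]
    have step : ∀ m ∈ D.support, coeff (Finsupp.single 0 l) (monomial (gmap m) (coeff m D))
        = if m = Finsupp.single 0 l then coeff m D else 0 := by
      intro m hm
      rw [coeff_monomial]
      by_cases h : m = Finsupp.single 0 l
      · rw [if_pos h, if_pos]
        subst h
        refine finsupp_two_ext _ _ ?_ ?_
        · rw [gmap_apply0]
        · rw [gmap_apply1, single_apply1]
      · rw [if_neg h, if_neg]
        intro hg
        apply h
        have e0 : m 0 = l := by rw [← gmap_apply0 m, hg, single_apply0]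
        have e1 : m 1 / 2 = 0 := by rw [← gmap_apply1 m, hg, single_apply1]
        have e1' : m 1 = 0 := by
          rcases (even_support l m hm) with ⟨k, hk⟩
          omega
        exact finsupp_two_ext _ _ (by rw [e0, single_apply0]) (by rw [e1', single_apply1])
    rw [Finset.sum_congr rfl step,
      Finset.sum_ite_eq' D.support _ (fun m => coeff m D)]
    have hmem : Finsupp.single (0 : Fin 2) l ∈ D.support :=
      MvPolynomial.mem_support_iff.mpr (by rw [hD, coeff_top l]; norm_num)
    rw [if_pos hmem, hD, coeff_top l]
  have hdegub : P.totalDegree ≤ l := by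
    rw [hP]
    refine le_trans (totalDegree_finset_sum _ _) ?_
    refine Finset.sup_le fun m hm => ?_
    refine le_trans (totalDegree_monomial_le _ _) ?_
    have hs : ((gmap m).sum fun _ e => e) = m 0 + m 1 / 2 := by
      rw [Finsupp.sum_fintype _ _ (fun i => rfl), Fin.sum_univ_two, gmap_apply0, gmap_apply1]
    have hms : (m.sum fun _ e => e) = m 0 + m 1 := by
      rw [Finsupp.sum_fintype _ _ (fun i => rfl), Fin.sum_univ_two]
    have hle : (m.sum fun _ e => e) ≤ D.totalDegree := le_totalDegree hm
    have := Hdet_deg l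
    rw [← hD] at this
    calc ((gmap m).sum fun _ e => e) = m 0 + m 1 / 2 := hs
      _ ≤ m 0 + m 1 := by omega
      _ ≤ l := by omega
  have hdeglb : l ≤ P.totalDegree := by
    have hmem : Finsupp.single (0 : Fin 2) l ∈ P.support :=
      MvPolynomial.mem_support_iff.mpr (by rw [hcoeffP]; norm_num)
    have := le_totalDegree hmem
    rwa [Finsupp.sum_single_index (by rfl)] at this
  exact ⟨P, le_antisymm hdegub hdeglb, heval.symm⟩
end

section
/- Let l ≥ 1 and Q(λ,R) = det(M₁(λ) + M₂(R)) as above. Then the only monomials of the form λ^k (pure powers of λ) appearing in Q with nonzero coefficient are λ^l (with coefficient 1); i.e., Q(λ,0) = λ^l. -/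
open MvPolynomial Matrix

/-- Q(λ,0) = λ^l, where Q(λ,R) = det(M₁(λ) + M₂(R)).
Variables: X 0 = λ, X 1 = R; substituting R := 0 yields λ^l. -/
theorem stmt5 (l : ℕ) (hl : 1 ≤ l) :
    aeval ![(X 0 : MvPolynomial (Fin 2) ℂ), 0]
      ((Matrix.of fun i j : Fin l =>
        (if (i : ℕ) = (j : ℕ) then X 0 - C (((i : ℕ) * (l - (i : ℕ)) : ℕ) : ℂ)
        else if (i : ℕ) + 1 = (j : ℕ) then
          -(C ((((i : ℕ) + 1 : ℕ)) : ℂ)) * X 0 + C ((((i : ℕ) + 1 : ℕ)) : ℂ) * X 1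
        else if (j : ℕ) + 1 = (i : ℕ) then C (((l - (i : ℕ) : ℕ)) : ℂ)
        else 0 : MvPolynomial (Fin 2) ℂ)).det)
    = (X 0 : MvPolynomial (Fin 2) ℂ) ^ l := by
  set P := MvPolynomial (Fin 2) ℂ
  set f := (aeval (R := ℂ) ![(X 0 : P), 0])
  rw [AlgHom.map_det, AlgHom.mapMatrix_apply]
  set L : Matrix (Fin l) (Fin l) P := Matrix.of fun i j =>
    if (i : ℕ) = (j : ℕ) then X 0
    else if (j : ℕ) + 1 = (i : ℕ) then C (((l - (i : ℕ) : ℕ)) : ℂ) else 0 with hL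
  set U : Matrix (Fin l) (Fin l) P := Matrix.of fun i j =>
    if (i : ℕ) = (j : ℕ) then 1
    else if (i : ℕ) + 1 = (j : ℕ) then -(C ((((i : ℕ) + 1 : ℕ)) : ℂ)) else 0 with hU
  have hf0 : f (X 0) = X 0 := by simp [f]
  have hf1 : f (X 1) = 0 := by simp [f]
  have hfC : ∀ c : ℂ, f (C c) = C c := by intro c; simp [f, algebraMap_eq]
  have key : (Matrix.of fun i j : Fin l =>
        (if (i : ℕ) = (j : ℕ) then X 0 - C (((i : ℕ) * (l - (i : ℕ)) : ℕ) : ℂ)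
        else if (i : ℕ) + 1 = (j : ℕ) then
          -(C ((((i : ℕ) + 1 : ℕ)) : ℂ)) * X 0 + C ((((i : ℕ) + 1 : ℕ)) : ℂ) * X 1
        else if (j : ℕ) + 1 = (i : ℕ) then C (((l - (i : ℕ) : ℕ)) : ℂ)
        else 0 : P)).map f = L * U := by
    refine Matrix.ext fun i j => ?_
    simp only [Matrix.map_apply, Matrix.of_apply, Matrix.mul_apply, hL, hU, Matrix.of_apply]
    rcases lt_trichotomy (i : ℕ) (j : ℕ) with hij | hij | hij
    · -- i < j
      rw [Finset.sum_eq_single i (fun k _ hk => ?_)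
        (fun h => absurd (Finset.mem_univ i) h)]
      · rw [if_pos (rfl : (i : ℕ) = (i : ℕ))]
        split_ifs with h1 h2 h3 <;>
          first
            | omega
            | (simp only [map_add, _root_.map_mul, map_neg, map_zero, map_sub, hf0, hf1, hfC];
                ring)
      · have hk' : (k : ℕ) ≠ (i : ℕ) := fun h => hk (Fin.ext h)
        split_ifs <;> first | omega | ring
    · -- i = j
      have hIJ : i = j := Fin.ext hij
      subst hIJ
      rcases Nat.eq_zero_or_pos (i : ℕ) with h0 | h0
      · rw [Finset.sum_eq_single i (fun k _ hk => ?_)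
          (fun h => absurd (Finset.mem_univ i) h)]
        · rw [if_pos (rfl : (i : ℕ) = (i : ℕ)), if_pos (rfl : (i : ℕ) = (i : ℕ)),
            if_pos (rfl : (i : ℕ) = (i : ℕ)), h0, mul_one]
          simp only [Nat.zero_mul, Nat.cast_zero, map_zero, map_sub, hf0, hfC, sub_zero]
        · have hk' : (k : ℕ) ≠ (i : ℕ) := fun h => hk (Fin.ext h)
          split_ifs <;> first | omega | ring
      · have hk0lt : (i : ℕ) - 1 < l := by omega
        set k0 : Fin l := ⟨(i : ℕ) - 1, hk0lt⟩ with hk0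
        have hv : (k0 : ℕ) = (i : ℕ) - 1 := rfl
        rw [Finset.sum_eq_add_of_mem k0 i (Finset.mem_univ _) (Finset.mem_univ _)
          (by intro h; apply_fun (Fin.val) at h; omega) (fun k _ hk => ?_)]
        · rw [if_pos (rfl : (i : ℕ) = (i : ℕ)), if_neg (by omega : ¬ (i : ℕ) = (k0 : ℕ)),
            if_pos (by omega : (k0 : ℕ) + 1 = (i : ℕ)),
            if_neg (by omega : ¬ (k0 : ℕ) = (i : ℕ)),
            if_pos (by omega : (k0 : ℕ) + 1 = (i : ℕ)),
            if_pos (rfl : (i : ℕ) = (i : ℕ)), if_pos (rfl : (i : ℕ) = (i : ℕ)), mul_one]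
          simp only [map_sub, hf0, hfC, hv]
          have h1 : (i : ℕ) - 1 + 1 = (i : ℕ) := by omega
          rw [h1, Nat.cast_mul, C_mul]
          ring
        · have h1 : (k : ℕ) ≠ (k0 : ℕ) := fun h => hk.1 (Fin.ext h)
          have h2 : (k : ℕ) ≠ (i : ℕ) := fun h => hk.2 (Fin.ext h)
          split_ifs <;> first | omega | ring
    · -- j < i
      by_cases h : (j : ℕ) + 1 = (i : ℕ)
      · rw [Finset.sum_eq_single j (fun k _ hk => ?_)
          (fun hh => absurd (Finset.mem_univ j) hh)]
        · rw [if_neg (by omega : ¬ (i : ℕ) = (j : ℕ)),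
            if_neg (by omega : ¬ (i : ℕ) + 1 = (j : ℕ)), if_pos h, hfC,
            if_neg (by omega : ¬ (i : ℕ) = (j : ℕ)),
            if_pos (rfl : (j : ℕ) = (j : ℕ)), mul_one]
        · have hk' : (k : ℕ) ≠ (j : ℕ) := fun hh => hk (Fin.ext hh)
          split_ifs <;> first | omega | ring
      · rw [if_neg (by omega : ¬ (i : ℕ) = (j : ℕ)),
          if_neg (by omega : ¬ (i : ℕ) + 1 = (j : ℕ)), if_neg h, map_zero]
        refine (Finset.sum_eq_zero fun k _ => ?_).symm
        split_ifs <;> first | omega | ring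
  rw [key, Matrix.det_mul]
  have hdL : L.det = (X 0 : P) ^ l := by
    rw [Matrix.det_of_lowerTriangular]
    · simp [hL]
    · intro i j h
      have h' : (i : ℕ) < (j : ℕ) := h
      simp only [hL, Matrix.of_apply]
      rw [if_neg (by omega), if_neg (by omega)]
  have hdU : U.det = 1 := by
    rw [Matrix.det_of_upperTriangular]
    · simp [hU]
    · intro i j h
      have h' : (j : ℕ) < (i : ℕ) := h
      simp only [hU, Matrix.of_apply]
      rw [if_neg (by omega), if_neg (by omega)]
  rw [hdL, hdU, mul_one]
end

section
/- Let l ≥ 2. Suppose Q ∈ ℂ[λ,R] is a polynomial of total degree l such that Q(λ,0) = c·λ^l for some c ≠ 0, the coefficient of R in Q is nonzero, and Q(0,0) = 0. Then Q is irreducible in ℂ[λ,R]. -/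
open MvPolynomial

private lemma deg_add' {σ : Type*} (e f : σ →₀ ℕ) :
    (e + f).degree = e.degree + f.degree := by
  simp [Finsupp.degree_eq_weight_one]

private lemma totalDeg_eq_sup_degree {σ R : Type*} [CommRing R] (p : MvPolynomial σ R) :
    p.totalDegree = p.support.sup Finsupp.degree := rfl

private lemma le_totalDeg {σ R : Type*} [CommRing R] {p : MvPolynomial σ R} {d : σ →₀ ℕ}
    (h : coeff d p ≠ 0) : d.degree ≤ p.totalDegree :=
  MvPolynomial.le_totalDegree (MvPolynomial.mem_support_iff.mpr h)

private lemma coeff_zero_of_lt {σ R : Type*} [CommRing R] {p : MvPolynomial σ R} {d : σ →₀ ℕ}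
    (h : p.totalDegree < d.degree) : coeff d p = 0 := by
  by_contra hne
  exact absurd (le_totalDeg hne) (not_le.mpr h)

private lemma hc_top_ne_zero {σ R : Type*} [CommRing R] {p : MvPolynomial σ R}
    (hp : p ≠ 0) : homogeneousComponent p.totalDegree p ≠ 0 := by
  have hsup : p.support.Nonempty := MvPolynomial.support_nonempty.mpr hp
  obtain ⟨d, hd, hdeg⟩ := Finset.exists_mem_eq_sup p.support hsup Finsupp.degree
  have : coeff d (homogeneousComponent p.totalDegree p) = coeff d p := by
    rw [coeff_homogeneousComponent, if_pos]
    rw [totalDeg_eq_sup_degree, hdeg]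
  intro h
  rw [h, coeff_zero] at this
  exact (MvPolynomial.mem_support_iff.mp hd) this.symm

private lemma totalDeg_mul_eq {σ R : Type*} [CommRing R] [IsDomain R]
    {p q : MvPolynomial σ R} (hp : p ≠ 0) (hq : q ≠ 0) :
    (p * q).totalDegree = p.totalDegree + q.totalDegree := by
  refine le_antisymm (totalDegree_mul p q) ?_
  set a := p.totalDegree with ha
  set b := q.totalDegree with hb
  have hPQ : homogeneousComponent a p * homogeneousComponent b q ≠ 0 :=
    mul_ne_zero (hc_top_ne_zero hp) (hc_top_ne_zero hq)
  obtain ⟨d, hd⟩ : ∃ d, coeff d (homogeneousComponent a p * homogeneousComponent b q) ≠ 0 := by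
    by_contra h
    push_neg at h
    exact hPQ (MvPolynomial.ext _ _ fun d => by simpa using h d)
  have hdeg : Finsupp.degree d = a + b := by
    have := ((homogeneousComponent_isHomogeneous a p).mul
      (homogeneousComponent_isHomogeneous b q)) hd
    rwa [Finsupp.degree_eq_weight_one]
  classical
  have key : coeff d (p * q) = coeff d (homogeneousComponent a p * homogeneousComponent b q) := by
    rw [coeff_mul, coeff_mul]
    apply Finset.sum_congr rfl
    rintro ⟨e, f⟩ hef
    rw [Finset.HasAntidiagonal.mem_antidiagonal] at hef
    have hsum : e.degree + f.degree = a + b := by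
      rw [← hdeg, ← hef, deg_add']
    simp only [coeff_homogeneousComponent]
    rcases lt_trichotomy e.degree a with h | h | h
    · have hf : q.totalDegree < f.degree := by omega
      simp [coeff_zero_of_lt hf]
    · rw [if_pos h, if_pos (by omega)]
    · have he : p.totalDegree < e.degree := by omega
      simp [coeff_zero_of_lt he]
  rw [← hdeg]
  exact le_totalDeg (by rw [key]; exact hd)

private lemma natDegree_rho_le (p : MvPolynomial (Fin 2) ℂ) :
    (aeval ![Polynomial.X, (0 : Polynomial ℂ)] p).natDegree ≤ p.totalDegree := by
  rw [aeval_def, eval₂_eq']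
  apply Polynomial.natDegree_sum_le_of_forall_le
  intro d hd
  have h1 : (∏ i, (![Polynomial.X, (0 : Polynomial ℂ)] i) ^ d i)
      = Polynomial.X ^ d 0 * 0 ^ d 1 := by
    rw [Fin.prod_univ_two]; rfl
  rw [h1]
  refine le_trans Polynomial.natDegree_mul_le ?_
  have h2 : (Polynomial.X ^ d 0 * (0 : Polynomial ℂ) ^ d 1).natDegree ≤ d 0 := by
    rcases Nat.eq_zero_or_pos (d 1) with h | h
    · simp [h]
    · simp [zero_pow h.ne']
  have h3 : d 0 ≤ d.degree := Finsupp.le_degree 0 d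
  have h4 : d.degree ≤ p.totalDegree := MvPolynomial.le_totalDegree hd
  simpa using le_trans h2 (le_trans h3 h4)

private lemma coeff_zero_rho (p : MvPolynomial (Fin 2) ℂ) :
    (aeval ![Polynomial.X, (0 : Polynomial ℂ)] p).coeff 0 = constantCoeff p := by
  rw [Polynomial.coeff_zero_eq_eval_zero, ← Polynomial.coe_aeval_eq_eval]
  have h := comp_aeval_apply (R := ℂ) (Polynomial.aeval (0 : ℂ)) p
    (f := ![Polynomial.X, (0 : Polynomial ℂ)])
  rw [h]
  have hfun : (fun i => Polynomial.aeval (0 : ℂ) (![Polynomial.X, (0 : Polynomial ℂ)] i))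
      = (fun _ => (0 : ℂ)) := by
    funext i; fin_cases i <;> simp
  rw [hfun, aeval_zero']
  rfl

private lemma unit_of_totalDegree_zero {A : MvPolynomial (Fin 2) ℂ} (hA0 : A ≠ 0)
    (h : A.totalDegree = 0) : IsUnit A := by
  have h' := (totalDegree_eq_zero_iff _ A).mp h
  have hC : A = C (coeff 0 A) := by
    ext d
    rcases eq_or_ne d 0 with rfl | hd
    · simp
    · rw [coeff_C, if_neg (Ne.symm hd)]
      by_contra hne
      have hd0 : d = 0 := Finsupp.ext fun x => h' d (MvPolynomial.mem_support_iff.mpr hne) x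
      exact hd hd0
  have hcc : coeff 0 A ≠ 0 := fun hz => hA0 (by rw [hC, hz, map_zero])
  rw [hC]
  exact (isUnit_iff_ne_zero.mpr hcc).map (C : ℂ →+* MvPolynomial (Fin 2) ℂ)

/-- Newton-diagram irreducibility criterion.  If Q ∈ ℂ[λ,R]
(λ = X 0, R = X 1) has total degree l ≥ 2, Q(λ,0) = c·λ^l with c ≠ 0, the
coefficient of R in Q is nonzero, and Q(0,0) = 0, then Q is irreducible. -/
theorem stmt6 (l : ℕ) (hl : 2 ≤ l) (Q : MvPolynomial (Fin 2) ℂ)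
    (hdeg : Q.totalDegree = l) (c : ℂ) (hc : c ≠ 0)
    (h0 : aeval ![(X 0 : MvPolynomial (Fin 2) ℂ), 0] Q = C c * X 0 ^ l)
    (hR : MvPolynomial.coeff (Finsupp.single (1 : Fin 2) 1) Q ≠ 0)
    (h00 : constantCoeff Q = 0) :
    Irreducible Q := by
  have hQ0 : Q ≠ 0 := by
    intro h
    rw [h, totalDegree_zero] at hdeg
    omega
  have hρQ : aeval ![Polynomial.X, (0 : Polynomial ℂ)] Q
      = Polynomial.C c * Polynomial.X ^ l := by
    have h1 := comp_aeval_apply (R := ℂ)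
      (aeval ![Polynomial.X, (0 : Polynomial ℂ)] : MvPolynomial (Fin 2) ℂ →ₐ[ℂ] Polynomial ℂ) Q
      (f := ![(X 0 : MvPolynomial (Fin 2) ℂ), 0])
    rw [h0] at h1
    have hfun : (fun i => aeval ![Polynomial.X, (0 : Polynomial ℂ)]
        (![(X 0 : MvPolynomial (Fin 2) ℂ), 0] i)) = ![Polynomial.X, (0 : Polynomial ℂ)] := by
      funext i; fin_cases i <;> simp
    rw [hfun] at h1
    rw [← h1]
    simp [Polynomial.algebraMap_eq]
  constructor
  · intro hu
    have := hu.map (constantCoeff : MvPolynomial (Fin 2) ℂ →+* ℂ)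
    rw [h00] at this
    exact not_isUnit_zero this
  · intro A B hAB
    by_contra hcon
    push_neg at hcon
    obtain ⟨hA, hB⟩ := hcon
    have hA0 : A ≠ 0 := fun h => hQ0 (by rw [hAB, h, zero_mul])
    have hB0 : B ≠ 0 := fun h => hQ0 (by rw [hAB, h, mul_zero])
    have hdAB : A.totalDegree + B.totalDegree = l := by
      rw [← hdeg, hAB, totalDeg_mul_eq hA0 hB0]
    have hdA1 : 1 ≤ A.totalDegree := by
      by_contra h
      exact hA (unit_of_totalDegree_zero hA0 (by omega))
    have hdB1 : 1 ≤ B.totalDegree := by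
      by_contra h
      exact hB (unit_of_totalDegree_zero hB0 (by omega))
    have hmul : aeval ![Polynomial.X, (0 : Polynomial ℂ)] A
        * aeval ![Polynomial.X, (0 : Polynomial ℂ)] B
        = Polynomial.C c * Polynomial.X ^ l := by
      rw [← map_mul, ← hAB, hρQ]
    have hprod0 : Polynomial.C c * Polynomial.X ^ l ≠ (0 : Polynomial ℂ) := by
      apply mul_ne_zero
      · simpa using hc
      · exact pow_ne_zero _ Polynomial.X_ne_zero
    have hρA0 : aeval ![Polynomial.X, (0 : Polynomial ℂ)] A ≠ 0 :=
      fun h => hprod0 (by rw [← hmul, h, zero_mul])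
    have hρB0 : aeval ![Polynomial.X, (0 : Polynomial ℂ)] B ≠ 0 :=
      fun h => hprod0 (by rw [← hmul, h, mul_zero])
    have hnat : (aeval ![Polynomial.X, (0 : Polynomial ℂ)] A).natDegree
        + (aeval ![Polynomial.X, (0 : Polynomial ℂ)] B).natDegree = l := by
      rw [← Polynomial.natDegree_mul hρA0 hρB0, hmul, Polynomial.natDegree_C_mul_X_pow l c hc]
    have hnA := natDegree_rho_le A
    have hnB := natDegree_rho_le B
    have heA : (aeval ![Polynomial.X, (0 : Polynomial ℂ)] A).natDegree = A.totalDegree := by omega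
    have heB : (aeval ![Polynomial.X, (0 : Polynomial ℂ)] B).natDegree = B.totalDegree := by omega
    -- X divides both images
    have hXdvd : ∀ p : MvPolynomial (Fin 2) ℂ,
        aeval ![Polynomial.X, (0 : Polynomial ℂ)] p ∣ Polynomial.X ^ l →
        1 ≤ (aeval ![Polynomial.X, (0 : Polynomial ℂ)] p).natDegree →
        Polynomial.X ∣ aeval ![Polynomial.X, (0 : Polynomial ℂ)] p := by
      intro p hdvd hnd
      obtain ⟨i, hi, hassoc⟩ := (dvd_prime_pow Polynomial.prime_X l).mp hdvd
      rcases Nat.eq_zero_or_pos i with h | h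
      · exfalso
        rw [h, pow_zero] at hassoc
        have := Polynomial.natDegree_eq_zero_of_isUnit (associated_one_iff_isUnit.mp hassoc)
        omega
      · exact dvd_trans (dvd_pow_self _ h.ne') hassoc.symm.dvd
    have hXl : Polynomial.X ^ l = aeval ![Polynomial.X, (0 : Polynomial ℂ)] A
        * (Polynomial.C c⁻¹ * aeval ![Polynomial.X, (0 : Polynomial ℂ)] B) := by
      calc Polynomial.X ^ l
          = Polynomial.C c⁻¹ * (Polynomial.C c * Polynomial.X ^ l) := by
            rw [← mul_assoc, ← Polynomial.C_mul, inv_mul_cancel₀ hc, Polynomial.C_1, one_mul]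
        _ = Polynomial.C c⁻¹ * (aeval ![Polynomial.X, (0 : Polynomial ℂ)] A
            * aeval ![Polynomial.X, (0 : Polynomial ℂ)] B) := by rw [hmul]
        _ = _ := by ring
    have hXA : Polynomial.X ∣ aeval ![Polynomial.X, (0 : Polynomial ℂ)] A :=
      hXdvd A ⟨_, hXl⟩ (by omega)
    have hXB : Polynomial.X ∣ aeval ![Polynomial.X, (0 : Polynomial ℂ)] B :=
      hXdvd B ⟨Polynomial.C c⁻¹ * aeval ![Polynomial.X, (0 : Polynomial ℂ)] A,
        by rw [hXl]; ring⟩ (by omega)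
    have hcA : constantCoeff A = 0 := by
      rw [← coeff_zero_rho]
      exact Polynomial.X_dvd_iff.mp hXA
    have hcB : constantCoeff B = 0 := by
      rw [← coeff_zero_rho]
      exact Polynomial.X_dvd_iff.mp hXB
    simp only [constantCoeff_eq] at hcA hcB
    apply hR
    rw [hAB, coeff_mul]
    apply Finset.sum_eq_zero
    rintro ⟨e, f⟩ hef
    rw [Finset.HasAntidiagonal.mem_antidiagonal] at hef
    have h0' : e 0 + f 0 = 0 := by
      have := DFunLike.congr_fun hef (0 : Fin 2)
      simpa [Finsupp.single_apply] using this
    have h1' : e 1 + f 1 = 1 := by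
      have := DFunLike.congr_fun hef (1 : Fin 2)
      simpa [Finsupp.single_apply] using this
    rcases Nat.eq_zero_or_pos (e 1) with h | h
    · have hx : ∀ x : Fin 2, e x = 0 := by
        intro x
        fin_cases x
        · show e 0 = 0; omega
        · show e 1 = 0; omega
      have he0 : e = 0 := Finsupp.ext fun x => by
        rw [Finsupp.coe_zero, Pi.zero_apply]; exact hx x
      rw [he0, hcA, zero_mul]
    · have hx : ∀ x : Fin 2, f x = 0 := by
        intro x
        fin_cases x
        · show f 0 = 0; omega
        · show f 1 = 0; omega
      have hf0 : f = 0 := Finsupp.ext fun x => by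
        rw [Finsupp.coe_zero, Pi.zero_apply]; exact hx x
      rw [hf0, hcB, mul_zero]
end

section
/- Let l ≥ 1 be odd. Setting μ = 0, one has det(𝒢_l + r·Id) = r·∏_{k=1}^{(l-1)/2} (r² - k(l-k)), where 𝒢_l is the l×l matrix with μ on the antidiagonal and -1,…,-(l-1) just below it (with μ = 0 the antidiagonal vanishes). -/
open Matrix Polynomial


def f12 (m : ℕ) : Fin 1 ⊕ Fin 2 × Fin m → Fin (2*m+1) :=
  fun x => match x with
  | Sum.inl _ => ⟨0, by omega⟩
  | Sum.inr (a, k) =>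
      if a.val = 0 then ⟨k.val + 1, by have := k.isLt; omega⟩
      else ⟨2*m - k.val, by have := k.isLt; omega⟩

lemma f12_inj (m : ℕ) : Function.Injective (f12 m) := by
  rintro (x | ⟨a, k⟩) (y | ⟨b, j⟩) h <;>
    simp only [f12, Fin.ext_iff] at h
  · exact congrArg Sum.inl (Subsingleton.elim x y)
  · exfalso; have hj := j.isLt
    fin_cases b <;> simp at h <;> omega
  · exfalso; have hk := k.isLt
    fin_cases a <;> simp at h <;> omega
  · have hk := k.isLt
    have hj := j.isLt
    fin_cases a <;> fin_cases b <;> simp at h ⊢ <;> omega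

lemma f12_bij (m : ℕ) : Function.Bijective (f12 m) := by
  rw [Fintype.bijective_iff_injective_and_card]
  exact ⟨f12_inj m, by simp; omega⟩

noncomputable def e12 (m : ℕ) : (Fin 1 ⊕ Fin 2 × Fin m) ≃ Fin (2*m+1) :=
  Equiv.ofBijective _ (f12_bij m)

lemma e12_apply (m : ℕ) (x : Fin 1 ⊕ Fin 2 × Fin m) : e12 m x = f12 m x := rfl

noncomputable def M12 (m : ℕ) : Matrix (Fin (2*m+1)) (Fin (2*m+1)) (Polynomial ℂ) :=
  Matrix.of fun i j : Fin (2*m+1) =>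
      ((if (i : ℕ) + (j : ℕ) = 2*m+1 then -(C (((i : ℕ) : ℕ) : ℂ)) else 0)
       + (if i = j then X else 0) : Polynomial ℂ)

lemma case11 (m : ℕ) (x y : Fin 1) : M12 m (f12 m (Sum.inl x)) (f12 m (Sum.inl y)) = X := by
  simp [M12, f12]

lemma case12 (m : ℕ) (x : Fin 1) (b : Fin 2) (p : Fin m) :
    M12 m (f12 m (Sum.inl x)) (f12 m (Sum.inr (b, p))) = 0 := by
  have hp := p.isLt
  simp only [M12, Matrix.of_apply]
  fin_cases b <;>
    simp only [f12, Fin.ext_iff, Fin.val_mk, reduceIte] <;>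
    norm_num <;> (try split_ifs) <;> first | omega | simp | simp_all

lemma case21 (m : ℕ) (a : Fin 2) (k : Fin m) (y : Fin 1) :
    M12 m (f12 m (Sum.inr (a, k))) (f12 m (Sum.inl y)) = 0 := by
  have hk := k.isLt
  simp only [M12, Matrix.of_apply]
  fin_cases a <;>
    simp only [f12, Fin.ext_iff, Fin.val_mk, reduceIte] <;>
    norm_num <;> (try split_ifs) <;> first | omega | simp | simp_all

lemma case22 (m : ℕ) (a b : Fin 2) (k p : Fin m) :
    M12 m (f12 m (Sum.inr (a,k))) (f12 m (Sum.inr (b,p)))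
      = (Matrix.blockDiagonal fun k : Fin m =>
            !![X, -C ((k.val + 1 : ℕ) : ℂ); -C ((2*m - k.val : ℕ) : ℂ), X]) (a,k) (b,p) := by
  have hk := k.isLt
  have hp := p.isLt
  simp only [M12, Matrix.of_apply, Matrix.blockDiagonal_apply]
  fin_cases a <;> fin_cases b <;>
    by_cases hkp : k = p <;>
    simp only [f12, hkp, if_pos, if_neg, ite_true, ite_false, reduceIte,
      Fin.ext_iff] <;>
    split_ifs <;>
    simp_all [Fin.ext_iff] <;> omega

/-- for odd l, at μ = 0,
det(𝒢_l + r·Id) = r·∏_{k=1}^{(l-1)/2} (r² - k(l-k)).  Here r = X. -/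
theorem stmt12 (l : ℕ) (hl : 1 ≤ l) (hodd : Odd l) :
    (Matrix.of fun i j : Fin l =>
      ((if (i : ℕ) + (j : ℕ) = l then -(C (((i : ℕ) : ℕ) : ℂ)) else 0)
       + (if i = j then X else 0) : Polynomial ℂ)).det
    = X * ∏ k ∈ Finset.range ((l - 1) / 2),
        (X ^ 2 - C ((((k + 1) * (l - (k + 1)) : ℕ)) : ℂ)) := by
  obtain ⟨m, hm⟩ := hodd
  subst hm
  show (M12 m).det = _
  rw [← Matrix.det_submatrix_equiv_self (e12 m)]
  have hmat : (M12 m).submatrix (e12 m) (e12 m)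
      = Matrix.fromBlocks (Matrix.of fun _ _ => X) 0 0
          (Matrix.blockDiagonal fun k : Fin m =>
            !![X, -C ((k.val + 1 : ℕ) : ℂ); -C ((2*m - k.val : ℕ) : ℂ), X]) := by
    refine Matrix.ext fun i j => ?_
    rcases i with i | ⟨a, k⟩ <;> rcases j with j | ⟨b, p⟩ <;>
      simp only [Matrix.submatrix_apply, e12_apply,
        Matrix.fromBlocks_apply₁₁, Matrix.fromBlocks_apply₁₂,
        Matrix.fromBlocks_apply₂₁, Matrix.fromBlocks_apply₂₂,
        Matrix.zero_apply]
    · exact case11 m i j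
    · exact case12 m i b p
    · exact case21 m a k j
    · exact case22 m a b k p
  rw [hmat, Matrix.det_fromBlocks_zero₂₁, Matrix.det_blockDiagonal]
  have h1 : (Matrix.of fun _ _ : Fin 1 => (X : Polynomial ℂ)).det = X := by
    simp [Matrix.det_fin_one]
  rw [h1]
  congr 1
  have hrange : (2*m+1 - 1)/2 = m := by omega
  rw [hrange, ← Fin.prod_univ_eq_prod_range
    (fun k => (X ^ 2 - C ((((k + 1) * (2*m+1 - (k + 1)) : ℕ)) : ℂ))) m]
  apply Finset.prod_congr rfl
  intro k _
  have hk := k.isLt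
  rw [Matrix.det_fin_two_of]
  have h2 : ((k.val + 1) * (2*m+1 - (k.val + 1)) : ℕ) = (k.val + 1) * (2*m - k.val) := by
    have : (2*m+1 - (k.val + 1) : ℕ) = 2*m - k.val := by omega
    rw [this]
  rw [h2, Nat.cast_mul, C_mul]
  ring
end

section
/- Let l ≥ 2 be even. Setting μ = 0, one has det(𝒢_l + r·Id) = r·(r - l/2)·∏_{k=1}^{(l-2)/2} (r² - k(l-k)), and this polynomial in r has no multiple roots. -/
open Matrix Polynomial

def eFun (m : ℕ) : Fin 2 ⊕ (Fin 2 × Fin m) → Fin (2*m+2)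
  | .inl a => if (a:ℕ) = 0 then ⟨0, by omega⟩ else ⟨m+1, by omega⟩
  | .inr (a, k) =>
      if (a:ℕ) = 0 then ⟨(k:ℕ)+1, by have := k.isLt; omega⟩
      else ⟨2*m+1-(k:ℕ), by have := k.isLt; omega⟩

lemma eFun_bij (m : ℕ) : Function.Bijective (eFun m) := by
  rw [Fintype.bijective_iff_injective_and_card]
  constructor
  · rintro (a | ⟨a, k⟩) (b | ⟨b, k'⟩) h <;>
      fin_cases a <;> fin_cases b <;>
      (try have h2 := k.2) <;> (try have h3 := k'.2) <;>
      simp only [eFun, Fin.mk.injEq, Fin.isValue, Fin.val_zero, Fin.val_one,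
        if_true, if_false, reduceIte] at h <;>
      first
      | rfl
      | (exfalso; omega)
      | (simp_all [Prod.ext_iff, Fin.ext_iff] <;> omega)
  · simp; ring

set_option maxHeartbeats 1000000 in
lemma submatrix_eq (m : ℕ) :
    ((Matrix.of fun i j : Fin (2*m+2) =>
      ((if (i : ℕ) + (j : ℕ) = 2*m+2 then -(C (((i : ℕ) : ℕ) : ℂ)) else 0)
       + (if i = j then X else 0) : Polynomial ℂ)).submatrix (eFun m) (eFun m))
    = Matrix.fromBlocks (!![X, 0; 0, X - C ((m+1 : ℕ) : ℂ)]) 0 0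
        (Matrix.blockDiagonal fun k : Fin m =>
          !![X, -C (((k:ℕ)+1 : ℕ) : ℂ); -C ((2*m+1-(k:ℕ) : ℕ) : ℂ), X]) := by
  apply Matrix.ext
  rintro (a | ⟨a, k⟩) (b | ⟨b, k'⟩) <;>
    fin_cases a <;> fin_cases b <;>
    (try have h2 := k.2) <;> (try have h3 := k'.2) <;>
    simp [eFun, Matrix.blockDiagonal_apply, Fin.ext_iff, Prod.ext_iff] <;>
    first
      | rfl
      | omega
      | (intro h; exfalso; omega)
      | (split_ifs <;>
          first
            | rfl
            | omega
            | (exfalso; omega)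
            | (simp_all)
            | (simp_all; omega)
            | ring)

lemma det_eq (m : ℕ) :
    (Matrix.of fun i j : Fin (2*m+2) =>
      ((if (i : ℕ) + (j : ℕ) = 2*m+2 then -(C (((i : ℕ) : ℕ) : ℂ)) else 0)
       + (if i = j then X else 0) : Polynomial ℂ)).det
    = X * (X - C ((m+1 : ℕ) : ℂ)) * ∏ k ∈ Finset.range m,
        (X ^ 2 - C ((((k+1) * (2*m+1-k) : ℕ)) : ℂ)) := by
  set M := (Matrix.of fun i j : Fin (2*m+2) =>
      ((if (i : ℕ) + (j : ℕ) = 2*m+2 then -(C (((i : ℕ) : ℕ) : ℂ)) else 0)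
       + (if i = j then X else 0) : Polynomial ℂ)) with hM
  let e : (Fin 2 ⊕ (Fin 2 × Fin m)) ≃ Fin (2*m+2) := Equiv.ofBijective _ (eFun_bij m)
  have h1 : M.det = (M.submatrix e e).det := (Matrix.det_submatrix_equiv_self e M).symm
  have h2 : (M.submatrix ⇑e ⇑e) = Matrix.fromBlocks (!![X, 0; 0, X - C ((m+1 : ℕ) : ℂ)]) 0 0
        (Matrix.blockDiagonal fun k : Fin m =>
          !![X, -C (((k:ℕ)+1 : ℕ) : ℂ); -C ((2*m+1-(k:ℕ) : ℕ) : ℂ), X]) :=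
    submatrix_eq m
  rw [h1, h2, Matrix.det_fromBlocks_zero₂₁, Matrix.det_blockDiagonal]
  rw [Matrix.det_fin_two_of]
  rw [← Fin.prod_univ_eq_prod_range
    (fun k => (X ^ 2 - C ((((k+1) * (2*m+1-k) : ℕ)) : ℂ)))]
  congr 1
  · ring
  · apply Finset.prod_congr rfl
    intro k _
    rw [Matrix.det_fin_two_of, Nat.cast_mul, C_mul]
    ring

noncomputable def rootF (m : ℕ) : Fin 2 ⊕ (Fin 2 × Fin m) → ℂ
  | .inl a => ![0, ((m+1 : ℕ) : ℂ)] a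
  | .inr (a, k) =>
      ![((Real.sqrt ((((k:ℕ)+1)*(2*m+1-(k:ℕ)) : ℕ) : ℝ) : ℝ) : ℂ),
        -((Real.sqrt ((((k:ℕ)+1)*(2*m+1-(k:ℕ)) : ℕ) : ℝ) : ℝ) : ℂ)] a

lemma sqrt_pos' (m : ℕ) (k : Fin m) :
    0 < Real.sqrt ((((k:ℕ)+1)*(2*m+1-(k:ℕ)) : ℕ) : ℝ) := by
  have h2 := k.2
  apply Real.sqrt_pos.mpr
  have : 0 < (((k:ℕ)+1)*(2*m+1-(k:ℕ)) : ℕ) := Nat.mul_pos (by omega) (by omega)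
  exact_mod_cast this

lemma sqrt_sq' (m : ℕ) (k : Fin m) :
    (Real.sqrt ((((k:ℕ)+1)*(2*m+1-(k:ℕ)) : ℕ) : ℝ))^2
      = ((((k:ℕ)+1)*(2*m+1-(k:ℕ)) : ℕ) : ℝ) :=
  Real.sq_sqrt (by positivity)

lemma prod_fac_eq (m : ℕ) :
    X * (X - C ((m+1 : ℕ) : ℂ)) * ∏ k ∈ Finset.range m,
        (X ^ 2 - C ((((k+1) * (2*m+1-k) : ℕ)) : ℂ))
    = ∏ i : Fin 2 ⊕ (Fin 2 × Fin m), (X - C (rootF m i)) := by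
  rw [Fintype.prod_sum_type]
  rw [Fin.prod_univ_two (fun a => (X - C (rootF m (Sum.inl a))))]
  have hswap : ∏ x : Fin 2 × Fin m, (X - C (rootF m (Sum.inr x)))
      = ∏ k : Fin m, ∏ a : Fin 2, (X - C (rootF m (Sum.inr (a, k)))) := by
    rw [Fintype.prod_prod_type, Finset.prod_comm]
  rw [hswap]
  have hk : ∀ k : Fin m, ∏ a : Fin 2, (X - C (rootF m (Sum.inr (a, k))))
      = X ^ 2 - C (((((k:ℕ)+1) * (2*m+1-(k:ℕ)) : ℕ)) : ℂ) := by
    intro k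
    rw [Fin.prod_univ_two (fun a => (X - C (rootF m (Sum.inr (a, k)))))]
    simp only [rootF, Matrix.cons_val_zero, Matrix.cons_val_one, Matrix.head_cons]
    have h2 : ((Real.sqrt ((((k:ℕ)+1)*(2*m+1-(k:ℕ)) : ℕ) : ℝ) : ℝ):ℂ)^2
        = (((((k:ℕ)+1) * (2*m+1-(k:ℕ)) : ℕ)) : ℂ) := by
      rw [← Complex.ofReal_pow, sqrt_sq' m k]
      norm_cast
    rw [map_neg, ← h2, map_pow]
    ring
  rw [Finset.prod_congr rfl (fun k _ => hk k)]
  rw [Fin.prod_univ_eq_prod_range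
    (fun k => (X ^ 2 - C ((((k+1) * (2*m+1-k) : ℕ)) : ℂ)))]
  simp only [rootF, Matrix.cons_val_zero, Matrix.cons_val_one, Matrix.head_cons, map_zero,
    sub_zero]

lemma rootF_inj (m : ℕ) : Function.Injective (rootF m) := by
  have hpos : ∀ k : Fin m, 0 < Real.sqrt ((((k:ℕ)+1)*(2*m+1-(k:ℕ)) : ℕ) : ℝ) :=
    sqrt_pos' m
  have hbig : ∀ k : Fin m, ¬ (((m:ℝ)+1) = Real.sqrt ((((k:ℕ)+1)*(2*m+1-(k:ℕ)) : ℕ) : ℝ)) := by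
    intro k hr
    have h2 := k.2
    have hsq : ((m:ℝ)+1)^2 = ((((k:ℕ)+1)*(2*m+1-(k:ℕ)) : ℕ) : ℝ) := by
      rw [hr, sqrt_sq' m k]
    have hcast : ((((k:ℕ)+1)*(2*m+1-(k:ℕ)) : ℕ) : ℝ)
        = ((k:ℕ)+1 : ℝ)*((2*m+1 : ℝ) - (k:ℕ)) := by
      push_cast [Nat.cast_sub (by omega : (k:ℕ) ≤ 2*m+1)]
      ring
    rw [hcast] at hsq
    have hklt : ((k:ℕ):ℝ) < m := by exact_mod_cast h2
    nlinarith [sq_nonneg ((m:ℝ) - (k:ℕ))]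
  have hinj : ∀ k k' : Fin m,
      Real.sqrt ((((k:ℕ)+1)*(2*m+1-(k:ℕ)) : ℕ) : ℝ)
        = Real.sqrt ((((k':ℕ)+1)*(2*m+1-(k':ℕ)) : ℕ) : ℝ) → k = k' := by
    intro k k' hr
    have heq : (((k:ℕ)+1)*(2*m+1-(k:ℕ)) : ℕ) = (((k':ℕ)+1)*(2*m+1-(k':ℕ)) : ℕ) := by
      have := (Real.sqrt_inj (by positivity) (by positivity)).mp hr
      exact_mod_cast this
    have h2 := k.2; have h3 := k'.2
    have hkk : (k:ℕ) = (k':ℕ) := by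
      zify [(by omega : (k:ℕ) ≤ 2*m+1), (by omega : (k':ℕ) ≤ 2*m+1)] at heq
      nlinarith [heq]
    exact Fin.ext hkk
  rintro (a | ⟨a, k⟩) (b | ⟨b, k'⟩) h <;>
    fin_cases a <;> fin_cases b <;>
    simp only [rootF, Fin.mk_zero, Fin.mk_one, Matrix.cons_val_zero, Matrix.cons_val_one, Matrix.head_cons] at h ⊢ <;>
    first
      | rfl
      | (exfalso
         first
           | (have hm : (0:ℕ) = m+1 := by exact_mod_cast h
              omega)
           | (have hm : (m+1:ℕ) = 0 := by exact_mod_cast h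
              omega)
           | (have h0 : (Real.sqrt ((((k':ℕ)+1)*(2*m+1-(k':ℕ)) : ℕ) : ℝ)) = 0 := by
                have := h.symm; exact_mod_cast this
              exact absurd h0 (ne_of_gt (hpos k'))
             )
           | (have h0 : (Real.sqrt ((((k':ℕ)+1)*(2*m+1-(k':ℕ)) : ℕ) : ℝ)) = 0 := by
                have : -((Real.sqrt ((((k':ℕ)+1)*(2*m+1-(k':ℕ)) : ℕ) : ℝ) : ℝ):ℂ) = 0 := h.symm
                have := neg_eq_zero.mp this; exact_mod_cast this
              exact absurd h0 (ne_of_gt (hpos k'))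
             )
           | (have h0 : (Real.sqrt ((((k:ℕ)+1)*(2*m+1-(k:ℕ)) : ℕ) : ℝ)) = 0 := by
                exact_mod_cast h
              exact absurd h0 (ne_of_gt (hpos k))
             )
           | (have h0 : (Real.sqrt ((((k:ℕ)+1)*(2*m+1-(k:ℕ)) : ℕ) : ℝ)) = 0 := by
                have : -((Real.sqrt ((((k:ℕ)+1)*(2*m+1-(k:ℕ)) : ℕ) : ℝ) : ℝ):ℂ) = 0 := h
                have := neg_eq_zero.mp this; exact_mod_cast this
              exact absurd h0 (ne_of_gt (hpos k))
             )
           | (exact hbig k' (by exact_mod_cast h))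
           | (exact hbig k (by exact_mod_cast h.symm))
           | (have hr : ((m:ℝ)+1) = -Real.sqrt ((((k':ℕ)+1)*(2*m+1-(k':ℕ)) : ℕ) : ℝ) := by
                exact_mod_cast h
              have := hpos k'; linarith)
           | (have hr : -Real.sqrt ((((k:ℕ)+1)*(2*m+1-(k:ℕ)) : ℕ) : ℝ) = ((m:ℝ)+1) := by
                exact_mod_cast h
              have := hpos k; linarith)
           | (have hr : Real.sqrt ((((k:ℕ)+1)*(2*m+1-(k:ℕ)) : ℕ) : ℝ)
                  = -Real.sqrt ((((k':ℕ)+1)*(2*m+1-(k':ℕ)) : ℕ) : ℝ) := by exact_mod_cast h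
              have := hpos k; have := hpos k'; linarith)
           | (have hr : -Real.sqrt ((((k:ℕ)+1)*(2*m+1-(k:ℕ)) : ℕ) : ℝ)
                  = Real.sqrt ((((k':ℕ)+1)*(2*m+1-(k':ℕ)) : ℕ) : ℝ) := by exact_mod_cast h
              have := hpos k; have := hpos k'; linarith))
      | (have hr : Real.sqrt ((((k:ℕ)+1)*(2*m+1-(k:ℕ)) : ℕ) : ℝ)
            = Real.sqrt ((((k':ℕ)+1)*(2*m+1-(k':ℕ)) : ℕ) : ℝ) := by
           first
             | exact_mod_cast h
             | (have := neg_injective h; exact_mod_cast this)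
         rw [hinj k k' hr])

lemma sf (m : ℕ) :
    Squarefree (X * (X - C ((m+1 : ℕ) : ℂ)) * ∏ k ∈ Finset.range m,
        (X ^ 2 - C ((((k+1) * (2*m+1-k) : ℕ)) : ℂ))) := by
  rw [prod_fac_eq]
  exact (Polynomial.separable_prod_X_sub_C_iff.mpr (rootF_inj m)).squarefree

/-- for even l ≥ 2, at μ = 0,
det(𝒢_l + r·Id) = r·(r - l/2)·∏_{k=1}^{(l-2)/2} (r² - k(l-k)), and this
polynomial in r has no multiple roots (it is squarefree).  Here r = X. -/
theorem stmt13 (l : ℕ) (hl : 2 ≤ l) (heven : Even l) :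
    (Matrix.of fun i j : Fin l =>
      ((if (i : ℕ) + (j : ℕ) = l then -(C (((i : ℕ) : ℕ) : ℂ)) else 0)
       + (if i = j then X else 0) : Polynomial ℂ)).det
    = X * (X - C (((l / 2 : ℕ)) : ℂ)) * ∏ k ∈ Finset.range ((l - 2) / 2),
        (X ^ 2 - C ((((k + 1) * (l - (k + 1)) : ℕ)) : ℂ))
    ∧ Squarefree
      ((Matrix.of fun i j : Fin l =>
        ((if (i : ℕ) + (j : ℕ) = l then -(C (((i : ℕ) : ℕ) : ℂ)) else 0)
         + (if i = j then X else 0) : Polynomial ℂ)).det) := by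
  obtain ⟨m, rfl⟩ : ∃ m, l = 2*m+2 := by
    obtain ⟨t, ht⟩ := heven; exact ⟨t-1, by omega⟩
  have hd2 : (2*m+2)/2 = m+1 := by omega
  have hd3 : (2*m+2-2)/2 = m := by omega
  have hprod : ∀ k, (k+1) * (2*m+2 - (k+1)) = (k+1) * (2*m+1-k) := by
    intro k; congr 1; omega
  have hdet := det_eq m
  constructor
  · rw [hdet, hd2, hd3]
    apply congrArg
    exact (Finset.prod_congr rfl fun k _ => by rw [hprod k]).symm
  · rw [hdet]
    exact sf m
end

section
/- For every l ≥ 1 and every real μ₀ > 0, the line {μ = μ₀} intersects the real curve Γ_l = {(λ,μ) ∈ ℝ² : P_l(λ,μ²) = 0} in exactly l distinct points, each of which is a regular (smooth) point of the curve at which the line {μ = μ₀} is not tangent to Γ_l. -/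
open Matrix

/-- The matrix from the statement. -/
noncomputable def stmtG (l : ℕ) (mu0 : ℝ) (lam : ℝ) : Matrix (Fin l) (Fin l) ℝ :=
  Matrix.of fun i j : Fin l =>
    (if (i : ℕ) = (j : ℕ) then lam - (((i : ℕ) * (l - (i : ℕ)) : ℕ) : ℝ)
    else if (i : ℕ) + 1 = (j : ℕ) then mu0 * (((i : ℕ) + 1 : ℕ) : ℝ)
    else if (j : ℕ) + 1 = (i : ℕ) then mu0 * (((l - (i : ℕ) : ℕ)) : ℝ)
    else 0 : ℝ)

/-- Symmetrized version. -/
noncomputable def stmtM (l : ℕ) (mu0 : ℝ) : Matrix (Fin l) (Fin l) ℝ :=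
  Matrix.of fun i j : Fin l =>
    (if (i : ℕ) = (j : ℕ) then (((i : ℕ) * (l - (i : ℕ)) : ℕ) : ℝ)
    else if (i : ℕ) + 1 = (j : ℕ) then
      -(mu0 * Real.sqrt ((((i : ℕ) + 1) * (l - 1 - (i : ℕ)) : ℕ)))
    else if (j : ℕ) + 1 = (i : ℕ) then
      -(mu0 * Real.sqrt ((((j : ℕ) + 1) * (l - 1 - (j : ℕ)) : ℕ)))
    else 0 : ℝ)

lemma stmtM_herm (l : ℕ) (mu0 : ℝ) : (stmtM l mu0).IsHermitian := by
  ext i j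
  rcases eq_or_ne (i : ℕ) (j : ℕ) with h | h
  · have hij : i = j := Fin.ext h
    subst hij; simp [stmtM, conjTranspose_apply]
  · simp only [conjTranspose_apply, stmtM, of_apply, star_trivial,
      if_neg (Ne.symm h), if_neg h]
    split_ifs <;> first | rfl | omega

lemma sqrt_key1 {l i : ℕ} (_hi : i + 1 < l) :
    Real.sqrt ((l-1).choose i) * Real.sqrt (((i+1) * (l-1-i) : ℕ)) =
      ((i+1 : ℕ) : ℝ) * Real.sqrt ((l-1).choose (i+1)) := by
  rw [← Real.sqrt_mul (by positivity), ← Nat.cast_mul]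
  have h2 : ((i+1 : ℕ) : ℝ) * Real.sqrt ((l-1).choose (i+1)) =
      Real.sqrt ((((i+1)*(i+1) * ((l-1).choose (i+1)) : ℕ) : ℝ)) := by
    push_cast
    rw [Real.sqrt_mul (by positivity), Real.sqrt_mul_self (by positivity)]
  rw [h2]
  congr 1
  norm_cast
  have h := Nat.choose_succ_right_eq (l-1) i
  calc (l-1).choose i * ((i+1) * (l-1-i)) = (i+1) * ((l-1).choose i * (l-1-i)) := by ring
    _ = (i+1) * ((l-1).choose (i+1) * (i+1)) := by rw [← h]
    _ = (i+1)*(i+1) * ((l-1).choose (i+1)) := by ring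

lemma sqrt_key2 {l i : ℕ} (_hi : i + 1 < l) :
    Real.sqrt ((l-1).choose (i+1)) * Real.sqrt (((i+1) * (l-1-i) : ℕ)) =
      ((l-1-i : ℕ) : ℝ) * Real.sqrt ((l-1).choose i) := by
  rw [← Real.sqrt_mul (by positivity), ← Nat.cast_mul]
  have h2 : ((l-1-i : ℕ) : ℝ) * Real.sqrt ((l-1).choose i) =
      Real.sqrt ((((l-1-i)*(l-1-i) * ((l-1).choose i) : ℕ) : ℝ)) := by
    push_cast
    rw [Real.sqrt_mul (by positivity), Real.sqrt_mul_self (by positivity)]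
  rw [h2]
  congr 1
  norm_cast
  have h := Nat.choose_succ_right_eq (l-1) i
  calc (l-1).choose (i+1) * ((i+1) * (l-1-i)) = ((l-1).choose (i+1) * (i+1)) * (l-1-i) := by ring
    _ = ((l-1).choose i * (l-1-i)) * (l-1-i) := by rw [h]
    _ = (l-1-i)*(l-1-i) * ((l-1).choose i) := by ring

lemma stmtG_det_eq (l : ℕ) (mu0 : ℝ) (lam : ℝ) :
    (stmtG l mu0 lam).det = (lam • (1 : Matrix (Fin l) (Fin l) ℝ) - stmtM l mu0).det := by
  have hd : ∀ i : Fin l, 0 < Real.sqrt ((l-1).choose (i : ℕ)) := fun i =>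
    Real.sqrt_pos.mpr (by exact_mod_cast Nat.choose_pos (by omega : (i : ℕ) ≤ l - 1))
  have hDdet : (Matrix.diagonal fun i : Fin l => Real.sqrt ((l-1).choose (i : ℕ))).det ≠ 0 := by
    rw [det_diagonal]
    exact Finset.prod_ne_zero_iff.mpr fun i _ => (hd i).ne'
  have key : (Matrix.diagonal fun i : Fin l => Real.sqrt ((l-1).choose (i : ℕ))) *
      (lam • 1 - stmtM l mu0) =
      stmtG l mu0 lam * (Matrix.diagonal fun i : Fin l => Real.sqrt ((l-1).choose (i : ℕ))) := by
    ext i j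
    rw [diagonal_mul, mul_diagonal]
    simp only [Matrix.sub_apply, Matrix.smul_apply, one_apply, smul_eq_mul, stmtM, stmtG, of_apply]
    rcases eq_or_ne (i : ℕ) (j : ℕ) with h | h
    · have hij : i = j := Fin.ext h
      subst hij
      simp [mul_comm]
    · rw [if_neg h, if_neg h, if_neg (show ¬i = j from fun hh => h (by rw [hh]))]
      split_ifs with h1 h2
      · have hlt : (i : ℕ) + 1 < l := by have := j.isLt; omega
        rw [← h1]
        linear_combination mu0 * sqrt_key1 hlt
      · have hlt : (j : ℕ) + 1 < l := by have := i.isLt; omega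
        have hls : l - (i : ℕ) = l - 1 - (j : ℕ) := by omega
        rw [hls, ← h2]
        linear_combination mu0 * sqrt_key2 hlt
      · ring
  have hdet := congrArg Matrix.det key
  rw [det_mul, det_mul] at hdet
  exact (mul_left_cancel₀ hDdet (hdet.trans (mul_comm _ _))).symm

lemma stmtM_conj (l : ℕ) (mu0 : ℝ) (lam : ℝ) :
    lam • (1 : Matrix (Fin l) (Fin l) ℝ) - stmtM l mu0 =
      ((stmtM_herm l mu0).eigenvectorUnitary : Matrix (Fin l) (Fin l) ℝ) *
        Matrix.diagonal (fun k => lam - (stmtM_herm l mu0).eigenvalues k) *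
        star ((stmtM_herm l mu0).eigenvectorUnitary : Matrix (Fin l) (Fin l) ℝ) := by
  set U : Matrix (Fin l) (Fin l) ℝ := ((stmtM_herm l mu0).eigenvectorUnitary : Matrix (Fin l) (Fin l) ℝ) with hU
  have hUU : U * star U = 1 := mem_unitaryGroup_iff.mp (stmtM_herm l mu0).eigenvectorUnitary.2
  have spec := (stmtM_herm l mu0).spectral_theorem
  rw [RCLike.ofReal_real_eq_id, Function.id_comp, Unitary.conjStarAlgAut_apply] at spec
  have hdg : Matrix.diagonal (fun k => lam - (stmtM_herm l mu0).eigenvalues k) =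
      lam • (1 : Matrix (Fin l) (Fin l) ℝ) - Matrix.diagonal ((stmtM_herm l mu0).eigenvalues) := by
    ext i j
    rcases eq_or_ne i j with h | h
    · subst h; simp [Matrix.diagonal_apply_eq]
    · simp [Matrix.diagonal_apply_ne _ h, Matrix.one_apply_ne h]
  rw [hdg, mul_sub, sub_mul, mul_smul_comm, mul_one, smul_mul_assoc, hUU, hU, ← spec]

lemma stmtM_det_prod (l : ℕ) (mu0 : ℝ) (lam : ℝ) :
    (lam • (1 : Matrix (Fin l) (Fin l) ℝ) - stmtM l mu0).det =
      ∏ k, (lam - (stmtM_herm l mu0).eigenvalues k) := by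
  set U : Matrix (Fin l) (Fin l) ℝ := ((stmtM_herm l mu0).eigenvectorUnitary : Matrix (Fin l) (Fin l) ℝ) with hU
  have hUU : U * star U = 1 := mem_unitaryGroup_iff.mp (stmtM_herm l mu0).eigenvectorUnitary.2
  have h1 : U.det * (star U).det = 1 := by rw [← det_mul, hUU, det_one]
  rw [stmtM_conj, det_mul, det_mul, det_diagonal, ← hU]
  calc U.det * (∏ k, (lam - (stmtM_herm l mu0).eigenvalues k)) * (star U).det
      = (∏ k, (lam - (stmtM_herm l mu0).eigenvalues k)) * (U.det * (star U).det) := by ring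
    _ = _ := by rw [h1, mul_one]

lemma stmtM_rank_eq (l : ℕ) (mu0 : ℝ) (lam : ℝ) :
    (lam • (1 : Matrix (Fin l) (Fin l) ℝ) - stmtM l mu0).rank =
      (Matrix.diagonal (fun k => lam - (stmtM_herm l mu0).eigenvalues k)).rank := by
  set U : Matrix (Fin l) (Fin l) ℝ := ((stmtM_herm l mu0).eigenvectorUnitary : Matrix (Fin l) (Fin l) ℝ) with hU
  have hUU : U * star U = 1 := mem_unitaryGroup_iff.mp (stmtM_herm l mu0).eigenvectorUnitary.2
  have h1 : U.det * (star U).det = 1 := by rw [← det_mul, hUU, det_one]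
  have hu1 : IsUnit U.det := IsUnit.of_mul_eq_one _ h1
  have hu2 : IsUnit (star U).det := IsUnit.of_mul_eq_one _ ((mul_comm _ _).trans h1)
  rw [stmtM_conj, ← hU, rank_mul_eq_left_of_isUnit_det _ _ hu2,
    rank_mul_eq_right_of_isUnit_det _ _ hu1]

lemma stmtM_rank_ge (l : ℕ) (mu0 : ℝ) (hmu0 : 0 < mu0) (lam : ℝ) :
    l - 1 ≤ (lam • (1 : Matrix (Fin l) (Fin l) ℝ) - stmtM l mu0).rank := by
  set A : Matrix (Fin l) (Fin l) ℝ := lam • 1 - stmtM l mu0 with hA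
  set r : Fin (l-1) → Fin l := fun k => ⟨(k : ℕ) + 1, by omega⟩ with hr
  set c : Fin (l-1) → Fin l := fun k => ⟨(k : ℕ), by omega⟩ with hc
  set B : Matrix (Fin (l-1)) (Fin (l-1)) ℝ := A.submatrix r c with hB
  have hBentry : ∀ i j : Fin (l-1), B i j =
      lam * (if ((i:ℕ)+1 : ℕ) = (j:ℕ) then 1 else 0) -
      (if ((i:ℕ)+1 : ℕ) = (j : ℕ) then (((((i:ℕ)+1)) * (l - ((i:ℕ)+1)) : ℕ) : ℝ)
        else if ((i:ℕ)+1) + 1 = (j:ℕ) then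
          -(mu0 * Real.sqrt (((((i:ℕ)+1) + 1) * (l - 1 - ((i:ℕ)+1)) : ℕ)))
        else if (j:ℕ) + 1 = (i:ℕ)+1 then
          -(mu0 * Real.sqrt ((((j:ℕ) + 1) * (l - 1 - (j:ℕ)) : ℕ)))
        else 0) := by
    intro i j
    simp only [hB, hA, submatrix_apply, Matrix.sub_apply, Matrix.smul_apply, one_apply, smul_eq_mul,
      stmtM, of_apply, hr, hc, Fin.mk.injEq]
  have hBtri : B.BlockTriangular id := by
    intro i j hij
    have hij' : (j : ℕ) < (i : ℕ) := hij
    rw [hBentry i j]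
    rw [if_neg (by omega), if_neg (by omega), if_neg (by omega), if_neg (by omega)]
    ring
  have hBdiag : ∀ i : Fin (l-1), B i i =
      mu0 * Real.sqrt (((((i:ℕ)) + 1) * (l - 1 - ((i:ℕ))) : ℕ)) := by
    intro i
    rw [hBentry i i]
    rw [if_neg (by omega), if_neg (by omega), if_neg (by omega), if_pos rfl]
    ring
  have hBdiag_pos : ∀ i : Fin (l-1), 0 < B i i := by
    intro i
    rw [hBdiag i]
    have hi := i.isLt
    have : (0 : ℝ) < ((((i:ℕ) + 1) * (l - 1 - (i:ℕ)) : ℕ) : ℝ) := by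
      have : 0 < ((i:ℕ) + 1) * (l - 1 - (i:ℕ)) := Nat.mul_pos (by omega) (by omega)
      exact_mod_cast this
    positivity
  have hBdet : B.det ≠ 0 := by
    rw [Matrix.det_of_upperTriangular hBtri]
    exact (Finset.prod_pos fun i _ => hBdiag_pos i).ne'
  have hBrank : B.rank = l - 1 := by
    rw [Matrix.rank_of_isUnit _ ((Matrix.isUnit_iff_isUnit_det _).mpr hBdet.isUnit),
      Fintype.card_fin]
  set P : Matrix (Fin (l-1)) (Fin l) ℝ := Matrix.of fun k x => if x = r k then (1:ℝ) else 0 with hP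
  set Q : Matrix (Fin l) (Fin (l-1)) ℝ := Matrix.of fun x k => if x = c k then (1:ℝ) else 0 with hQ
  have hfact : B = P * (A * Q) := by
    ext k k'
    simp [hB, hP, hQ, Matrix.mul_apply, ite_mul, mul_ite, mul_one, mul_zero, zero_mul, one_mul]
  calc l - 1 = B.rank := hBrank.symm
    _ = (P * (A * Q)).rank := by rw [hfact]
    _ ≤ (A * Q).rank := Matrix.rank_mul_le_right _ _
    _ ≤ A.rank := Matrix.rank_mul_le_left _ _

lemma stmtM_ev_inj (l : ℕ) (mu0 : ℝ) (hmu0 : 0 < mu0) :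
    Function.Injective (stmtM_herm l mu0).eigenvalues := by
  classical
  intro i j hij
  by_contra hne
  have hvne : (i : ℕ) ≠ (j : ℕ) := fun h => hne (Fin.ext h)
  have h2l : 2 ≤ l := by have := i.isLt; have := j.isLt; omega
  set ev := (stmtM_herm l mu0).eigenvalues with hev
  set lam := ev i with hlam
  have hrk : (lam • (1 : Matrix (Fin l) (Fin l) ℝ) - stmtM l mu0).rank =
      Fintype.card {k // lam - ev k ≠ 0} := by
    rw [stmtM_rank_eq, Matrix.rank_diagonal]
  have hge := stmtM_rank_ge l mu0 hmu0 lam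
  have hcard : Fintype.card {k // lam - ev k ≠ 0} + 2 ≤ l := by
    rw [Fintype.card_subtype]
    have hsub : ({i, j} : Finset (Fin l)) ⊆
        Finset.univ.filter (fun k => ¬(lam - ev k ≠ 0)) := by
      intro x hx
      simp only [Finset.mem_insert, Finset.mem_singleton] at hx
      simp only [Finset.mem_filter, Finset.mem_univ, true_and, not_not, sub_eq_zero]
      rcases hx with rfl | rfl
      · exact hlam
      · exact hij
    have h2 : 2 ≤ (Finset.univ.filter (fun k => ¬(lam - ev k ≠ 0))).card := by
      calc 2 = ({i, j} : Finset (Fin l)).card := by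
            rw [Finset.card_insert_of_notMem (by simp [hne]), Finset.card_singleton]
        _ ≤ _ := Finset.card_le_card hsub
    have h3 := Finset.card_filter_add_card_filter_not
      (s := (Finset.univ : Finset (Fin l))) (p := fun k => lam - ev k ≠ 0)
    rw [Finset.card_univ, Fintype.card_fin] at h3
    omega
  omega

/-- for μ₀ > 0 the horizontal line {μ = μ₀} meets the real spectral
curve Γ_l = {F(λ,μ) = 0}, F(λ,μ) = det(H_l(μ) + λ·Id), in exactly l distinct
points; each is a regular point of the curve where the line is not tangent
(∂F/∂λ ≠ 0 there). -/
theorem stmt14 (l : ℕ) (hl : 1 ≤ l) (mu0 : ℝ) (hmu0 : 0 < mu0) :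
    ∃ S : Finset ℝ, S.card = l ∧
      (∀ lam : ℝ,
        (Matrix.of fun i j : Fin l =>
          (if (i : ℕ) = (j : ℕ) then lam - (((i : ℕ) * (l - (i : ℕ)) : ℕ) : ℝ)
          else if (i : ℕ) + 1 = (j : ℕ) then mu0 * (((i : ℕ) + 1 : ℕ) : ℝ)
          else if (j : ℕ) + 1 = (i : ℕ) then mu0 * (((l - (i : ℕ) : ℕ)) : ℝ)
          else 0 : ℝ)).det = 0 ↔ lam ∈ S) ∧
      ∀ lam ∈ S,
        deriv (fun t : ℝ =>
          (Matrix.of fun i j : Fin l =>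
            (if (i : ℕ) = (j : ℕ) then t - (((i : ℕ) * (l - (i : ℕ)) : ℕ) : ℝ)
            else if (i : ℕ) + 1 = (j : ℕ) then mu0 * (((i : ℕ) + 1 : ℕ) : ℝ)
            else if (j : ℕ) + 1 = (i : ℕ) then mu0 * (((l - (i : ℕ) : ℕ)) : ℝ)
            else 0 : ℝ)).det) lam ≠ 0 := by
  classical
  show ∃ S : Finset ℝ, S.card = l ∧
      (∀ lam : ℝ, (stmtG l mu0 lam).det = 0 ↔ lam ∈ S) ∧
      ∀ lam ∈ S, deriv (fun t : ℝ => (stmtG l mu0 t).det) lam ≠ 0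
  set ev := (stmtM_herm l mu0).eigenvalues with hev
  have hinj := stmtM_ev_inj l mu0 hmu0
  have hdet : ∀ t : ℝ, (stmtG l mu0 t).det = ∏ k, (t - ev k) := fun t => by
    rw [stmtG_det_eq, stmtM_det_prod]
  refine ⟨Finset.univ.image ev, ?_, ?_, ?_⟩
  · rw [Finset.card_image_of_injective _ hinj, Finset.card_univ, Fintype.card_fin]
  · intro lam
    rw [hdet lam, Finset.prod_eq_zero_iff]
    simp only [Finset.mem_univ, true_and, Finset.mem_image, sub_eq_zero]
    exact exists_congr fun k => eq_comm
  · intro lam hlam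
    obtain ⟨k₀, -, hk₀⟩ := Finset.mem_image.mp hlam
    set p : Polynomial ℝ := ∏ k, (Polynomial.X - Polynomial.C (ev k)) with hp
    have hfun : (fun t : ℝ => (stmtG l mu0 t).det) = fun t => p.eval t := by
      funext t
      rw [hdet t, hp]
      simp [Polynomial.eval_prod]
    rw [hfun, Polynomial.deriv, ← hk₀]
    set q : Polynomial ℝ := ∏ k ∈ Finset.univ.erase k₀, (Polynomial.X - Polynomial.C (ev k))
      with hq
    have hpq : p = (Polynomial.X - Polynomial.C (ev k₀)) * q := by
      rw [hp, hq]
      exact (Finset.mul_prod_erase _ _ (Finset.mem_univ k₀)).symm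
    rw [hpq, Polynomial.derivative_mul]
    simp only [Polynomial.derivative_sub, Polynomial.derivative_X, Polynomial.derivative_C,
      sub_zero, one_mul, Polynomial.eval_add, Polynomial.eval_mul, Polynomial.eval_sub,
      Polynomial.eval_X, Polynomial.eval_C, sub_self, zero_mul, add_zero, mul_zero]
    rw [hq]
    simp only [Polynomial.eval_prod, Polynomial.eval_sub, Polynomial.eval_X, Polynomial.eval_C]
    refine Finset.prod_ne_zero_iff.mpr fun k hk => sub_ne_zero.mpr fun h => ?_
    exact (Finset.mem_erase.mp hk).1 (hinj h).symm
end

section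
/- For every l ≥ 1, the projective closure of the complex curve Γ_l = {P_l(λ,μ²) = 0} ⊂ ℂ² intersects the line at infinity transversely in exactly l distinct points, corresponding to the asymptotic directions λ/μ = l-1, l-3, …, -(l-1); in particular the point at infinity of the λ-axis does not lie on the closure of Γ_l. -/
noncomputable def ffc (a b : ℕ) : Polynomial ℂ :=
  (1 + Polynomial.X) ^ a * (1 - Polynomial.X) ^ b

open Polynomial in
lemma ffc_deriv (a b : ℕ) :
    (1 - Polynomial.X ^ 2) * Polynomial.derivative (ffc a b)
      = (Polynomial.C ((a : ℂ) - b) - Polynomial.C ((a : ℂ) + b) * Polynomial.X)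
        * ffc a b := by
  unfold ffc
  rcases a with _ | a <;> rcases b with _ | b <;>
    simp [derivative_pow, derivative_one, derivative_X, mul_comm, Nat.cast_succ] <;>
    ring

open Polynomial in
lemma ffc_natDegree (a b : ℕ) : (ffc a b).natDegree ≤ a + b := by
  unfold ffc
  refine natDegree_mul_le.trans (add_le_add ?_ ?_) <;>
  refine natDegree_pow_le.trans ?_
  · calc a * (1 + X : Polynomial ℂ).natDegree ≤ a * 1 :=
        Nat.mul_le_mul_left _ ((natDegree_add_le _ _).trans (by simp))
      _ = a := mul_one a
  · calc b * (1 - X : Polynomial ℂ).natDegree ≤ b * 1 :=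
        Nat.mul_le_mul_left _ ((natDegree_sub_le _ _).trans (by simp))
      _ = b := mul_one b

open Polynomial in
lemma ffc_coeff_zero (a b : ℕ) : (ffc a b).coeff 0 = 1 := by
  rw [coeff_zero_eq_eval_zero]; simp [ffc]

-- recurrence at index 0
open Polynomial in
lemma ffc_rec0 (a b : ℕ) :
    (ffc a b).coeff 1 = ((a : ℂ) - b) * (ffc a b).coeff 0 := by
  have key := congrArg (fun p => Polynomial.coeff p 0) (ffc_deriv a b)
  simp only [sub_mul, one_mul, coeff_sub, coeff_derivative, mul_assoc] at key
  rw [coeff_C_mul, coeff_C_mul] at key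
  simp at key
  linear_combination key

-- recurrence at index n+1
open Polynomial in
lemma ffc_rec (a b n : ℕ) :
    ((n : ℂ) + 2) * (ffc a b).coeff (n + 2) + ((a : ℂ) + b - n) * (ffc a b).coeff n
      = ((a : ℂ) - b) * (ffc a b).coeff (n + 1) := by
  have key := congrArg (fun p => Polynomial.coeff p (n + 1)) (ffc_deriv a b)
  simp only [sub_mul, one_mul, coeff_sub, mul_assoc] at key
  rw [coeff_C_mul, coeff_C_mul, coeff_X_mul] at key
  rw [coeff_derivative] at key
  rcases n with _ | m
  · rw [show ((X : Polynomial ℂ) ^ 2 * derivative (ffc a b)).coeff 1 = 0 by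
      rw [mul_comm, coeff_mul_X_pow']; simp] at key
    push_cast at key ⊢
    linear_combination key
  · rw [show (m + 1 + 1) = m + 2 from rfl, coeff_X_pow_mul] at key
    have e1 : m + 2 + 1 = m + 1 + 2 := rfl
    rw [e1, coeff_derivative] at key
    push_cast at key ⊢
    linear_combination key

/-- The tridiagonal constant matrix. -/
def Bmat (l : ℕ) : Matrix (Fin l) (Fin l) ℂ :=
  Matrix.of fun i j =>
    if (i : ℕ) + 1 = (j : ℕ) then ((i : ℕ) + 1 : ℂ)
    else if (j : ℕ) + 1 = (i : ℕ) then ((l - (i : ℕ) : ℕ) : ℂ) else 0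

/-- eigenvalues -/
noncomputable def ev (l : ℕ) (a : Fin l) : ℂ := 2 * (a : ℕ) - ((l : ℂ) - 1)

/-- eigenvector matrix (columns are eigenvectors) -/
noncomputable def Pm (l : ℕ) : Matrix (Fin l) (Fin l) ℂ :=
  Matrix.of fun i a => (ffc (a : ℕ) (l - 1 - (a : ℕ))).coeff (i : ℕ)

lemma sum_ite_fin (l m : ℕ) (c : ℂ) (v : ℕ → ℂ) (p : Fin l → Prop) [DecidablePred p]
    (hp : ∀ j, p j ↔ m = (j : ℕ)) (hv : ∀ n, l ≤ n → v n = 0) :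
    (∑ j : Fin l, if p j then c * v (j : ℕ) else 0) = c * v m := by
  by_cases h : m < l
  · rw [Finset.sum_eq_single_of_mem (⟨m, h⟩ : Fin l) (Finset.mem_univ _)
      (fun j _ hj => if_neg (fun hpj => hj (Fin.ext ((hp j).mp hpj).symm)))]
    rw [if_pos ((hp _).mpr rfl)]
  · rw [Finset.sum_eq_zero (fun j _ => if_neg (fun hpj => by
      have := (hp j).mp hpj; have := j.isLt; omega))]
    rw [hv m (by omega), mul_zero]

lemma ffc_coeff_hi (l : ℕ) (a : Fin l) (n : ℕ) (hn : l ≤ n) :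
    (ffc (a : ℕ) (l - 1 - (a : ℕ))).coeff n = 0 := by
  apply Polynomial.coeff_eq_zero_of_natDegree_lt
  have h1 := ffc_natDegree (a : ℕ) (l - 1 - (a : ℕ))
  have h2 := a.isLt
  omega

lemma Bmat_eigen (l : ℕ) (a : Fin l) :
    (Bmat l).mulVec (fun i => Pm l i a) = ev l a • fun i => Pm l i a := by
  have hal := a.isLt
  have hbC : ((l - 1 - (a : ℕ) : ℕ) : ℂ) = (l : ℂ) - 1 - (a : ℕ) := by
    have h1 : ((a : ℕ) + (l - 1 - (a : ℕ)) : ℕ) = l - 1 := by omega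
    have h2 : (((a : ℕ) + (l - 1 - (a : ℕ)) : ℕ) : ℂ) = ((l - 1 : ℕ) : ℂ) := by rw [h1]
    push_cast [Nat.cast_sub (by omega : 1 ≤ l)] at h2
    linear_combination h2
  funext i
  have hiL := i.isLt
  show (∑ j : Fin l, Bmat l i j * Pm l j a) = ev l a * Pm l i a
  have hsplit : ∀ j : Fin l, Bmat l i j * Pm l j a
      = (if (i : ℕ) + 1 = (j : ℕ) then ((i : ℕ) + 1 : ℂ) * Pm l j a else 0)
      + (if (j : ℕ) + 1 = (i : ℕ) then ((l - (i : ℕ) : ℕ) : ℂ) * Pm l j a else 0) := by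
    intro j
    simp only [Bmat, Matrix.of_apply]
    split_ifs with h1 h2 <;> first | omega | ring
  rw [Finset.sum_congr rfl (fun j _ => hsplit j), Finset.sum_add_distrib]
  simp only [Pm, Matrix.of_apply]
  rcases hI : (i : ℕ) with _ | m
  · rw [sum_ite_fin l 1 _ _ _ (fun j => by omega) (ffc_coeff_hi l a)]
    rw [Finset.sum_eq_zero (fun j _ => if_neg (by omega)), add_zero]
    rw [ffc_rec0 (a : ℕ) (l - 1 - (a : ℕ))]
    simp only [ev, hbC]
    push_cast
    ring
  · rw [sum_ite_fin l (m + 2) _ _ _ (fun j => by omega) (ffc_coeff_hi l a)]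
    rw [sum_ite_fin l m _ _ _ (fun j => by omega) (ffc_coeff_hi l a)]
    have hlm : ((l - (m + 1) : ℕ) : ℂ)
        = ((a : ℕ) : ℂ) + ((l - 1 - (a : ℕ) : ℕ) : ℂ) - m := by
      rw [Nat.cast_sub (by omega : m + 1 ≤ l), hbC]
      push_cast
      ring
    rw [hlm]
    have hrec := ffc_rec (a : ℕ) (l - 1 - (a : ℕ)) m
    simp only [ev, hbC]
    push_cast
    push_cast at hrec
    linear_combination hrec - ((ffc (a : ℕ) (l - 1 - (a : ℕ))).coeff m + (ffc (a : ℕ) (l - 1 - (a : ℕ))).coeff (m + 1)) * hbC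

open MvPolynomial Matrix

lemma ev_injective (l : ℕ) : Function.Injective (ev l) := by
  intro a b h
  simp only [ev, sub_left_inj, mul_right_inj' (two_ne_zero' ℂ)] at h
  exact Fin.ext (Nat.cast_injective h)

lemma Pm_isUnit (l : ℕ) : IsUnit (Pm l) := by
  rw [← Matrix.linearIndependent_cols_iff_isUnit]
  have hcol : ∀ a : Fin l, (Pm l)ᵀ a = fun i => Pm l i a := fun a => rfl
  refine Module.End.eigenvectors_linearIndependent' (Matrix.mulVecLin (Bmat l))
    (ev l) (ev_injective l) _ (fun a => ?_)
  constructor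
  · rw [Module.End.mem_eigenspace_iff]
    rw [Matrix.mulVecLin_apply]; exact Bmat_eigen l a
  · intro hzero
    have h0 : (0 : ℕ) < l := a.isLt.trans_le' (Nat.zero_le _) |>.trans_le le_rfl
    have := congrFun hzero ⟨0, Nat.pos_of_ne_zero (by omega)⟩
    simp only [Matrix.transpose_apply, Pm, Matrix.of_apply, Pi.zero_apply] at this
    change (ffc (a : ℕ) (l - 1 - (a : ℕ))).coeff 0 = 0 at this
    rw [ffc_coeff_zero] at this
    exact one_ne_zero this

noncomputable def Qm (l : ℕ) : Matrix (Fin l) (Fin l) ℂ := (Pm l)⁻¹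

lemma Pm_mul_Qm (l : ℕ) : Pm l * Qm l = 1 := Matrix.mul_nonsing_inv _
  ((Matrix.isUnit_iff_isUnit_det _).mp (Pm_isUnit l))

lemma Bmat_conj (l : ℕ) : Bmat l = Pm l * Matrix.diagonal (ev l) * Qm l := by
  have hBP : Bmat l * Pm l = Pm l * Matrix.diagonal (ev l) := by
    ext i a
    rw [Matrix.mul_apply, Matrix.mul_diagonal]
    have := congrFun (Bmat_eigen l a) i
    simp only [Matrix.mulVec, dotProduct, Pi.smul_apply, smul_eq_mul] at this
    rw [this, mul_comm]
  calc Bmat l = Bmat l * (Pm l * Qm l) := by rw [Pm_mul_Qm]; simp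
    _ = (Bmat l * Pm l) * Qm l := by rw [Matrix.mul_assoc]
    _ = Pm l * Matrix.diagonal (ev l) * Qm l := by rw [hBP]

/-- determinant of the top-degree part -/
lemma det_top (l : ℕ) :
    ((X 0 : MvPolynomial (Fin 2) ℂ) • (1 : Matrix (Fin l) (Fin l) (MvPolynomial (Fin 2) ℂ))
      + (X 1 : MvPolynomial (Fin 2) ℂ) • (Bmat l).map (C : ℂ → MvPolynomial (Fin 2) ℂ)).det
    = ∏ a : Fin l, ((X 0 : MvPolynomial (Fin 2) ℂ) + C (ev l a) * X 1) := by
  classical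
  set Cr : ℂ →+* MvPolynomial (Fin 2) ℂ := (C : ℂ →+* MvPolynomial (Fin 2) ℂ)
  have hmap : ∀ A B : Matrix (Fin l) (Fin l) ℂ, (A * B).map Cr = A.map Cr * B.map Cr :=
    fun A B => Matrix.map_mul
  have hPQ : (Pm l).map Cr * (Qm l).map Cr = 1 := by
    rw [← hmap, Pm_mul_Qm]
    simp [Matrix.map_one]
  have hQP : (Qm l).map Cr * (Pm l).map Cr = 1 := by
    have : Qm l * Pm l = 1 := Matrix.nonsing_inv_mul _
      ((Matrix.isUnit_iff_isUnit_det _).mp (Pm_isUnit l))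
    rw [← hmap, this]
    simp [Matrix.map_one]
  have hdiag : (Matrix.diagonal (ev l)).map Cr
      = Matrix.diagonal (fun a => C (ev l a)) := by
    rw [Matrix.diagonal_map]; simp
  have hconj : (X 0 : MvPolynomial (Fin 2) ℂ) • (1 : Matrix (Fin l) (Fin l) (MvPolynomial (Fin 2) ℂ))
      + (X 1 : MvPolynomial (Fin 2) ℂ) • (Bmat l).map Cr
      = (Pm l).map Cr * Matrix.diagonal (fun a => X 0 + C (ev l a) * X 1)
        * (Qm l).map Cr := by
    have hd : Matrix.diagonal (fun a : Fin l => (X 0 : MvPolynomial (Fin 2) ℂ) + C (ev l a) * X 1)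
        = (X 0 : MvPolynomial (Fin 2) ℂ) • (1 : Matrix (Fin l) (Fin l) (MvPolynomial (Fin 2) ℂ))
          + (X 1 : MvPolynomial (Fin 2) ℂ) • (Matrix.diagonal (ev l)).map Cr := by
      rw [hdiag]
      ext i j
      by_cases h : i = j <;>
        simp [Matrix.diagonal_apply, Matrix.one_apply, h, mul_comm]
    rw [hd, Matrix.mul_add, Matrix.add_mul]
    rw [Matrix.mul_smul, Matrix.smul_mul, Matrix.mul_smul, Matrix.smul_mul]
    rw [Matrix.mul_one, hPQ]
    rw [← hmap, ← hmap, ← Bmat_conj]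
  rw [hconj, Matrix.det_mul, Matrix.det_mul, Matrix.det_diagonal]
  rw [mul_comm ((Pm l).map Cr).det, mul_assoc, ← Matrix.det_mul, hPQ]
  simp
  rfl



/-- coefficient of λ^n in the product of linear forms is 1 -/
lemma coeff_prod_lin (q : ℕ → ℂ) (n : ℕ) :
    MvPolynomial.coeff (Finsupp.single (0 : Fin 2) n)
      (∏ k ∈ Finset.range n, (X 0 - C (q k) * X 1)) = 1 := by
  induction n with
  | zero => simp
  | succ n ih =>
    rw [Finset.prod_range_succ, MvPolynomial.coeff_mul]
    rw [Finsupp.antidiagonal_single, Finset.sum_map]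
    rw [Finset.sum_eq_single (n, 1)]
    · simp only [Function.Embedding.coe_prodMap, Function.Embedding.coeFn_mk, Prod.map_apply']
      rw [ih]
      have h1 : MvPolynomial.coeff (Finsupp.single (0 : Fin 2) 1)
          ((X 0 - C (q n) * X 1) : MvPolynomial (Fin 2) ℂ) = 1 := by
        rw [MvPolynomial.coeff_sub, MvPolynomial.coeff_C_mul]
        rw [MvPolynomial.coeff_X', MvPolynomial.coeff_X']
        rw [if_pos rfl, if_neg (by
          intro h
          have := DFunLike.congr_fun h (1 : Fin 2)
          simp [Finsupp.single_apply] at this)]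
        ring
      rw [h1, mul_one]
    · rintro ⟨i, j⟩ hmem hne
      simp only [Finset.HasAntidiagonal.mem_antidiagonal] at hmem
      simp only [Function.Embedding.coe_prodMap, Function.Embedding.coeFn_mk, Prod.map_apply']
      have hj : j ≠ 1 := by
        intro hj; exact hne (by simp [hj]; omega)
      have h2 : MvPolynomial.coeff (Finsupp.single (0 : Fin 2) j)
          ((X 0 - C (q n) * X 1) : MvPolynomial (Fin 2) ℂ) = 0 := by
        rw [MvPolynomial.coeff_sub, MvPolynomial.coeff_C_mul]
        rw [MvPolynomial.coeff_X', MvPolynomial.coeff_X']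
        rw [if_neg (by
          intro h
          exact hj (Finsupp.single_injective (0 : Fin 2) h.symm)), if_neg (by
          intro h
          have := DFunLike.congr_fun h (1 : Fin 2)
          simp [Finsupp.single_apply] at this)]
        ring
      rw [h2, mul_zero]
    · intro h
      simp at h

/-- the full matrix of the statement -/
noncomputable def MM (l : ℕ) : Matrix (Fin l) (Fin l) (MvPolynomial (Fin 2) ℂ) :=
  Matrix.of fun i j : Fin l =>
    (if (i : ℕ) = (j : ℕ) then X 0 - C (((i : ℕ) * (l - (i : ℕ)) : ℕ) : ℂ)
    else if (i : ℕ) + 1 = (j : ℕ) then X 1 * C ((((i : ℕ) + 1 : ℕ)) : ℂ)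
    else if (j : ℕ) + 1 = (i : ℕ) then X 1 * C (((l - (i : ℕ) : ℕ)) : ℂ)
    else 0 : MvPolynomial (Fin 2) ℂ)

/-- degree ≤ 1 part -/
noncomputable def Mt (l : ℕ) : Matrix (Fin l) (Fin l) (MvPolynomial (Fin 2) ℂ) :=
  Matrix.of fun i j : Fin l =>
    X 0 * (if i = j then 1 else 0) + X 1 * C (Bmat l i j)

/-- constant part -/
noncomputable def NN (l : ℕ) : Matrix (Fin l) (Fin l) (MvPolynomial (Fin 2) ℂ) :=
  Matrix.of fun i j : Fin l =>
    if (i : ℕ) = (j : ℕ) then -C (((i : ℕ) * (l - (i : ℕ)) : ℕ) : ℂ) else 0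

lemma Mt_eq (l : ℕ) : Mt l
    = (X 0 : MvPolynomial (Fin 2) ℂ) • (1 : Matrix (Fin l) (Fin l) (MvPolynomial (Fin 2) ℂ))
      + (X 1 : MvPolynomial (Fin 2) ℂ) • (Bmat l).map (C : ℂ → MvPolynomial (Fin 2) ℂ) := by
  ext i j
  simp [Mt, Matrix.one_apply, smul_eq_mul]

lemma MM_split (l : ℕ) (i j : Fin l) : MM l i j = Mt l i j + NN l i j := by
  have hij := i.isLt
  simp only [MM, Mt, NN, Bmat, Matrix.of_apply]
  by_cases h1 : (i : ℕ) = (j : ℕ)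
  · have : i = j := Fin.ext h1
    subst this
    rw [if_pos rfl, if_pos rfl, if_pos rfl, if_neg (by omega), if_neg (by omega)]
    ring_nf
    rw [map_zero]
    ring
  · rw [if_neg h1, if_neg h1, if_neg (fun h : i = j => h1 (congrArg Fin.val h)), add_zero]
    by_cases h2 : (i : ℕ) + 1 = (j : ℕ)
    · rw [if_pos h2, if_pos h2]
      push_cast
      ring
    · rw [if_neg h2, if_neg h2]
      by_cases h3 : (j : ℕ) + 1 = (i : ℕ)
      · rw [if_pos h3, if_pos h3]
        ring
      · rw [if_neg h3, if_neg h3, map_zero]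
        ring

lemma Mt_deg (l : ℕ) (i j : Fin l) : (Mt l i j).totalDegree ≤ 1 := by
  simp only [Mt, Matrix.of_apply]
  refine (totalDegree_add _ _).trans (max_le ?_ ?_) <;>
    refine (totalDegree_mul _ _).trans ?_
  · rw [totalDegree_X]
    split_ifs <;> simp
  · rw [totalDegree_X, totalDegree_C]

lemma NN_deg (l : ℕ) (i j : Fin l) : (NN l i j).totalDegree = 0 := by
  simp only [NN, Matrix.of_apply]
  split_ifs
  · rw [← map_neg (C : ℂ →+* MvPolynomial (Fin 2) ℂ), totalDegree_C]
  · exact totalDegree_zero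

lemma det_diff_deg (l : ℕ) : ((MM l).det - (Mt l).det).totalDegree ≤ l - 1 := by
  rw [Matrix.det_apply', Matrix.det_apply', ← Finset.sum_sub_distrib]
  refine (MvPolynomial.totalDegree_finset_sum _ _).trans (Finset.sup_le fun σ _ => ?_)
  rw [← mul_sub]
  refine (MvPolynomial.totalDegree_mul _ _).trans ?_
  have hsign : (((Equiv.Perm.sign σ : ℤ) : MvPolynomial (Fin 2) ℂ)).totalDegree = 0 := by
    rw [← map_intCast (C : ℂ →+* MvPolynomial (Fin 2) ℂ)]
    exact totalDegree_C _
  rw [hsign, zero_add]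
  rw [Finset.prod_congr rfl (fun i _ => MM_split l (σ i) i), Finset.prod_add]
  rw [← Finset.sum_erase_add _ _ (Finset.mem_powerset_self Finset.univ)]
  rw [Finset.sdiff_self, Finset.prod_empty, mul_one, add_sub_cancel_right]
  refine (MvPolynomial.totalDegree_finset_sum _ _).trans (Finset.sup_le fun t ht => ?_)
  rw [Finset.mem_erase, Finset.mem_powerset] at ht
  have hcard : t.card ≤ l - 1 := by
    have h1 : t.card < Finset.univ.card :=
      Finset.card_lt_card (lt_of_le_of_ne ht.2 ht.1)
    rw [Finset.card_univ, Fintype.card_fin] at h1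
    omega
  refine (MvPolynomial.totalDegree_mul _ _).trans ?_
  have h2 : (∏ i ∈ t, Mt l (σ i) i).totalDegree ≤ t.card := by
    refine (MvPolynomial.totalDegree_finset_prod _ _).trans ?_
    calc ∑ i ∈ t, (Mt l (σ i) i).totalDegree ≤ ∑ _i ∈ t, 1 :=
          Finset.sum_le_sum fun i _ => Mt_deg l (σ i) i
      _ = t.card := by simp
  have h3 : (∏ i ∈ Finset.univ \ t, NN l (σ i) i).totalDegree ≤ 0 := by
    refine (MvPolynomial.totalDegree_finset_prod _ _).trans ?_
    simp [NN_deg]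
  omega

/-- the projective closure of Γ_l meets the infinity line
transversely in exactly l distinct points with asymptotic directions
λ/μ = l-1, l-3, …, -(l-1): the defining polynomial D = det(H_l + λId)
(X 0 = λ, X 1 = μ) has total degree l, its top homogeneous part is the product
of the l pairwise distinct linear forms λ - (l-1-2k)μ, and the coefficient of
λ^l is nonzero (so the point at infinity of the λ-axis is not on the closure). -/
theorem stmt15 (l : ℕ) (hl : 1 ≤ l) :
    (((Matrix.of fun i j : Fin l =>
        (if (i : ℕ) = (j : ℕ) then X 0 - C (((i : ℕ) * (l - (i : ℕ)) : ℕ) : ℂ)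
        else if (i : ℕ) + 1 = (j : ℕ) then X 1 * C ((((i : ℕ) + 1 : ℕ)) : ℂ)
        else if (j : ℕ) + 1 = (i : ℕ) then X 1 * C (((l - (i : ℕ) : ℕ)) : ℂ)
        else 0 : MvPolynomial (Fin 2) ℂ)).det).totalDegree = l) ∧
    (MvPolynomial.homogeneousComponent l
      ((Matrix.of fun i j : Fin l =>
        (if (i : ℕ) = (j : ℕ) then X 0 - C (((i : ℕ) * (l - (i : ℕ)) : ℕ) : ℂ)
        else if (i : ℕ) + 1 = (j : ℕ) then X 1 * C ((((i : ℕ) + 1 : ℕ)) : ℂ)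
        else if (j : ℕ) + 1 = (i : ℕ) then X 1 * C (((l - (i : ℕ) : ℕ)) : ℂ)
        else 0 : MvPolynomial (Fin 2) ℂ)).det)
      = ∏ k ∈ Finset.range l, (X 0 - C ((l : ℂ) - 1 - 2 * (k : ℕ)) * X 1)) ∧
    (Function.Injective fun k : Fin l => (l : ℂ) - 1 - 2 * ((k : ℕ) : ℂ)) ∧
    MvPolynomial.coeff (Finsupp.single (0 : Fin 2) l)
      ((Matrix.of fun i j : Fin l =>
        (if (i : ℕ) = (j : ℕ) then X 0 - C (((i : ℕ) * (l - (i : ℕ)) : ℕ) : ℂ)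
        else if (i : ℕ) + 1 = (j : ℕ) then X 1 * C ((((i : ℕ) + 1 : ℕ)) : ℂ)
        else if (j : ℕ) + 1 = (i : ℕ) then X 1 * C (((l - (i : ℕ) : ℕ)) : ℂ)
        else 0 : MvPolynomial (Fin 2) ℂ)).det) ≠ 0 := by
  have hMM : (Matrix.of fun i j : Fin l =>
        (if (i : ℕ) = (j : ℕ) then X 0 - C (((i : ℕ) * (l - (i : ℕ)) : ℕ) : ℂ)
        else if (i : ℕ) + 1 = (j : ℕ) then X 1 * C ((((i : ℕ) + 1 : ℕ)) : ℂ)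
        else if (j : ℕ) + 1 = (i : ℕ) then X 1 * C (((l - (i : ℕ) : ℕ)) : ℂ)
        else 0 : MvPolynomial (Fin 2) ℂ)) = MM l := rfl
  rw [hMM]
  set T : MvPolynomial (Fin 2) ℂ :=
    ∏ k ∈ Finset.range l, (X 0 - C ((l : ℂ) - 1 - 2 * (k : ℕ)) * X 1) with hT
  -- det of the top part equals T
  have hMtT : (Mt l).det = T := by
    rw [Mt_eq, det_top, hT, ← Fin.prod_univ_eq_prod_range
      (fun k => (X 0 - C ((l : ℂ) - 1 - 2 * (k : ℕ)) * X 1 : MvPolynomial (Fin 2) ℂ)) l]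
    refine Finset.prod_congr rfl fun a _ => ?_
    have h1 : ((l : ℂ) - 1 - 2 * ((a : Fin l) : ℕ)) = -(ev l a) := by
      simp only [ev]; ring
    rw [h1, map_neg, neg_mul, sub_neg_eq_add]
  have hdd : ((MM l).det - T).totalDegree ≤ l - 1 := by
    rw [← hMtT]; exact det_diff_deg l
  have hD : (MM l).det = T + ((MM l).det - T) := by ring
  -- T is homogeneous of degree l
  have homT : T.IsHomogeneous l := by
    have hfac : ∀ k ∈ Finset.range l,
        ((X 0 - C ((l : ℂ) - 1 - 2 * (k : ℕ)) * X 1 : MvPolynomial (Fin 2) ℂ)).IsHomogeneous 1 := by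
      intro k _
      refine MvPolynomial.IsHomogeneous.sub (isHomogeneous_X _ _) ?_
      simpa only [zero_add] using (isHomogeneous_C _ _).mul (isHomogeneous_X _ (1 : Fin 2))
    have := MvPolynomial.IsHomogeneous.prod (Finset.range l) _ (fun _ => 1) hfac
    rwa [Finset.sum_const, Finset.card_range, smul_eq_mul, mul_one] at this
  -- coefficient of λ^l
  have hsum : (Finsupp.single (0 : Fin 2) l).sum (fun _ e => e) = l :=
    Finsupp.sum_single_index rfl
  have hsum2 : (∑ i ∈ (Finsupp.single (0 : Fin 2) l).support,
      (Finsupp.single (0 : Fin 2) l) i) = l := hsum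
  have hcoeffD : MvPolynomial.coeff (Finsupp.single (0 : Fin 2) l) ((MM l).det) = 1 := by
    rw [hD, MvPolynomial.coeff_add, coeff_prod_lin (fun k => (l : ℂ) - 1 - 2 * (k : ℕ)) l,
      MvPolynomial.coeff_eq_zero_of_totalDegree_lt (by rw [hsum2]; omega), add_zero]
  refine ⟨?_, ?_, ?_, ?_⟩
  · refine le_antisymm ?_ ?_
    · rw [hD]
      refine (totalDegree_add _ _).trans (max_le homT.totalDegree_le (hdd.trans (by omega)))
    · have hmem : Finsupp.single (0 : Fin 2) l ∈ ((MM l).det).support :=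
        MvPolynomial.mem_support_iff.mpr (by rw [hcoeffD]; exact one_ne_zero)
      have := MvPolynomial.le_totalDegree hmem
      rwa [hsum] at this
  · rw [hD, map_add, MvPolynomial.homogeneousComponent_eq_zero _ _ (by omega : ((MM l).det - T).totalDegree < l), add_zero]
    exact MvPolynomial.weightedHomogeneousComponent_eq_self homT
  · intro a b h
    simp only at h
    have hab : ((a : ℕ) : ℂ) = ((b : ℕ) : ℂ) := by linear_combination (-1/2 : ℂ) * h
    exact Fin.ext (Nat.cast_injective hab)
  · rw [hcoeffD]
    exact one_ne_zero
end

section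
/- Let l ≥ 2. The germ at 0 of the complex curve W_l = {P_l(λ,v) = 0} ⊂ ℂ² is smooth, and its tangent line at the origin is {λ + v = 0}-translate class, i.e., the linear part of P_l at 0 is a nonzero multiple of λ + v; in particular W_l is transverse at 0 to the line {v = 0}. -/
open MvPolynomial Matrix

lemma fin2_single_eq {p q r s : ℕ} :
    (Finsupp.single (0 : Fin 2) p + Finsupp.single 1 q
      = Finsupp.single (0 : Fin 2) r + Finsupp.single 1 s) ↔ (p = r ∧ q = s) := by
  constructor
  · intro h
    constructor
    · have := DFunLike.congr_fun h 0; simpa using this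
    · have := DFunLike.congr_fun h 1; simpa using this
  · rintro ⟨rfl, rfl⟩; rfl

lemma fin2_decomp (m : Fin 2 →₀ ℕ) :
    m = Finsupp.single 0 (m 0) + Finsupp.single 1 (m 1) := by
  ext i
  fin_cases i <;> simp

lemma transfer (P : MvPolynomial (Fin 2) ℂ) (a b : ℕ) :
    coeff (Finsupp.single 0 a + Finsupp.single 1 (2 * b))
        (aeval ![(X 0 : MvPolynomial (Fin 2) ℂ), (X 1) ^ 2] P)
      = coeff (Finsupp.single 0 a + Finsupp.single 1 b) P := by
  induction P using MvPolynomial.induction_on' with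
  | monomial u r =>
    rw [aeval_monomial, Finsupp.prod_fintype _ _ (fun i => pow_zero _), Fin.prod_univ_two]
    simp only [Matrix.cons_val_zero, Matrix.cons_val_one, Matrix.head_cons, ← pow_mul]
    have h2 : (algebraMap ℂ (MvPolynomial (Fin 2) ℂ)) r * (X 0 ^ (u 0) * X 1 ^ (2 * u 1))
        = monomial (Finsupp.single 0 (u 0) + Finsupp.single 1 (2 * u 1)) r := by
      rw [algebraMap_eq, X_pow_eq_monomial, X_pow_eq_monomial, monomial_mul, C_mul_monomial]
      simp
    rw [h2, coeff_monomial, coeff_monomial]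
    congr 1
    simp only [eq_iff_iff]
    rw [fin2_single_eq]
    constructor
    · rintro ⟨h1, h2⟩
      have hb : u 1 = b := by omega
      rw [fin2_decomp u, h1, hb]
    · rintro rfl
      simp [fin2_single_eq]
  | add p q hp hq => rw [map_add, coeff_add, coeff_add, hp, hq]

lemma coeff_eq_zero_of_dvd {k : ℕ} {q : MvPolynomial (Fin 2) ℂ} {m : Fin 2 →₀ ℕ}
    (h : X 1 ^ k ∣ q) (hm : m 1 < k) : coeff m q = 0 := by
  induction k generalizing q m with
  | zero => omega
  | succ k ih =>
    obtain ⟨r, rfl⟩ := h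
    have : (X 1 : MvPolynomial (Fin 2) ℂ) ^ (k + 1) * r = (X 1 ^ k * r) * X 1 := by ring
    rw [this, coeff_mul_X']
    split_ifs with h1
    · apply ih ⟨r, rfl⟩
      have : ((m - Finsupp.single 1 1 : Fin 2 →₀ ℕ)) 1 = m 1 - 1 := by
        rw [Finsupp.tsub_apply, Finsupp.single_eq_same]
      rw [this]
      simp only [Finsupp.mem_support_iff] at h1
      omega
    · rfl

lemma dvd_prod_perm {n : ℕ} (M : Matrix (Fin n) (Fin n) (MvPolynomial (Fin 2) ℂ))
    (hM : ∀ i j, i ≠ j → X 1 ∣ M i j) (σ : Equiv.Perm (Fin n)) :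
    (X 1 : MvPolynomial (Fin 2) ℂ) ^ σ.support.card ∣ ∏ i, M (σ i) i := by
  have h1 : (X 1 : MvPolynomial (Fin 2) ℂ) ^ σ.support.card
      = ∏ _i ∈ σ.support, (X 1 : MvPolynomial (Fin 2) ℂ) := by
    rw [Finset.prod_const]
  rw [h1]
  refine dvd_trans (Finset.prod_dvd_prod_of_dvd _ _ fun i hi => ?_)
    (Finset.prod_dvd_prod_of_subset _ _ _ (Finset.subset_univ _))
  exact hM _ _ (Equiv.Perm.mem_support.mp hi)

lemma prod_swap_eq {n : ℕ} (M : Matrix (Fin n) (Fin n) (MvPolynomial (Fin 2) ℂ))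
    {a b : Fin n} (hab : a ≠ b) :
    ∏ i, M (Equiv.swap a b i) i
      = M b a * (M a b * ∏ i ∈ (Finset.univ.erase a).erase b, M i i) := by
  rw [← Finset.mul_prod_erase Finset.univ _ (Finset.mem_univ a),
    ← Finset.mul_prod_erase _ _ (Finset.mem_erase.mpr ⟨hab.symm, Finset.mem_univ b⟩),
    Equiv.swap_apply_left, Equiv.swap_apply_right]
  congr 1
  congr 1
  refine Finset.prod_congr rfl fun i hi => ?_
  simp only [Finset.mem_erase] at hi
  rw [Equiv.swap_apply_of_ne_of_ne hi.2.1 hi.1]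

lemma single12_sub : (Finsupp.single (1 : Fin 2) 2 - Finsupp.single 1 1) = Finsupp.single 1 1 := by
  rw [← Finsupp.single_tsub]

lemma single11_sub : (Finsupp.single (1 : Fin 2) 1 - Finsupp.single 1 1) = 0 := by
  rw [← Finsupp.single_tsub]
  simp

lemma single01_sub : (Finsupp.single (0 : Fin 2) 1 - Finsupp.single 0 1) = 0 := by
  rw [← Finsupp.single_tsub]
  simp

/-- the germ at 0 of W_l = {P_l(λ,v) = 0} is smooth with the
linear part of P_l at the origin a nonzero multiple of λ + v (hence W_l is
transverse at 0 to {v = 0}): P_l(0,0) = 0 and the coefficients of u and v in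
P_l are equal and nonzero.  Here P_l is defined by det(H_l + λId) = P_l(λ,μ²)
(variables of the determinant: X 0 = λ, X 1 = μ; of P: X 0 = u, X 1 = v). -/
theorem stmt19 (l : ℕ) (hl : 2 ≤ l) (P : MvPolynomial (Fin 2) ℂ)
    (hP : (Matrix.of fun i j : Fin l =>
        (if (i : ℕ) = (j : ℕ) then X 0 - C (((i : ℕ) * (l - (i : ℕ)) : ℕ) : ℂ)
        else if (i : ℕ) + 1 = (j : ℕ) then X 1 * C ((((i : ℕ) + 1 : ℕ)) : ℂ)
        else if (j : ℕ) + 1 = (i : ℕ) then X 1 * C (((l - (i : ℕ) : ℕ)) : ℂ)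
        else 0 : MvPolynomial (Fin 2) ℂ)).det
      = aeval ![X 0, (X 1) ^ 2] P) :
    ∃ c : ℂ, c ≠ 0 ∧ constantCoeff P = 0 ∧
      MvPolynomial.coeff (Finsupp.single (0 : Fin 2) 1) P = c ∧
      MvPolynomial.coeff (Finsupp.single (1 : Fin 2) 1) P = c := by
  set Mmat : Matrix (Fin l) (Fin l) (MvPolynomial (Fin 2) ℂ) := Matrix.of fun i j : Fin l =>
        (if (i : ℕ) = (j : ℕ) then X 0 - C (((i : ℕ) * (l - (i : ℕ)) : ℕ) : ℂ)
        else if (i : ℕ) + 1 = (j : ℕ) then X 1 * C ((((i : ℕ) + 1 : ℕ)) : ℂ)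
        else if (j : ℕ) + 1 = (i : ℕ) then X 1 * C (((l - (i : ℕ) : ℕ)) : ℂ)
        else 0 : MvPolynomial (Fin 2) ℂ) with hMmat
  set cf : Fin l → ℂ := fun i => (((i : ℕ) * (l - (i : ℕ)) : ℕ) : ℂ) with hcf
  set a0 : Fin l := ⟨0, by omega⟩ with ha0
  set a1 : Fin l := ⟨1, by omega⟩ with ha1
  have ha01 : a0 ≠ a1 := by
    intro h
    have := congrArg Fin.val h
    simp [ha0, ha1] at this
  have hdiag : ∀ i : Fin l, Mmat i i = X 0 - C (cf i) := by
    intro i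
    simp [hMmat, hcf, Matrix.of_apply]
  have hcfa0 : cf a0 = 0 := by simp [hcf, ha0]
  have hcfa1 : cf a1 = ((l - 1 : ℕ) : ℂ) := by simp [hcf, ha1, Nat.cast_sub (show 1 ≤ l by omega)]
  have hdvd : ∀ i j : Fin l, i ≠ j → (X 1 : MvPolynomial (Fin 2) ℂ) ∣ Mmat i j := by
    intro i j hij
    have hv : (i : ℕ) ≠ (j : ℕ) := fun e => hij (Fin.ext e)
    simp only [hMmat, Matrix.of_apply]
    rw [if_neg hv]
    split_ifs
    · exact dvd_mul_right _ _
    · exact dvd_mul_right _ _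
    · exact dvd_zero _
  set cc : ℂ := ∏ i ∈ Finset.univ.erase a0, (-(cf i)) with hccdef
  -- nonzero
  have hccne : cc ≠ 0 := by
    rw [hccdef]
    rw [Finset.prod_ne_zero_iff]
    intro i hi
    have hi0 : (i : ℕ) ≠ 0 := by
      intro h0
      exact (Finset.mem_erase.mp hi).1 (Fin.ext (by simp [ha0, h0]))
    have hil : (i : ℕ) < l := i.isLt
    simp only [hcf, neg_ne_zero, Nat.cast_ne_zero]
    exact Nat.mul_ne_zero hi0 (by omega)
  -- constant coefficient of det is 0
  have hdet0 : constantCoeff Mmat.det = 0 := by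
    rw [RingHom.map_det, RingHom.mapMatrix_apply]
    have hmap : Mmat.map (constantCoeff : MvPolynomial (Fin 2) ℂ →+* ℂ)
        = Matrix.diagonal (fun i => -(cf i)) := by
      ext i j
      by_cases h : i = j
      · subst h
        simp [Matrix.map_apply, hdiag, Matrix.diagonal]
      · have hv : (i : ℕ) ≠ (j : ℕ) := fun e => h (Fin.ext e)
        simp only [Matrix.map_apply, hMmat, Matrix.of_apply, Matrix.diagonal_apply_ne _ h,
          if_neg hv]
        split_ifs <;> simp
    rw [hmap, Matrix.det_diagonal]
    refine Finset.prod_eq_zero (Finset.mem_univ a0) ?_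
    rw [hcfa0, neg_zero]
  -- coefficient extraction from the determinant
  have key : ∀ m : Fin 2 →₀ ℕ, coeff m Mmat.det
      = ∑ σ : Equiv.Perm (Fin l),
          ((Equiv.Perm.sign σ : ℤ) : ℂ) * coeff m (∏ i, Mmat (σ i) i) := by
    intro m
    rw [Matrix.det_apply', coeff_sum]
    refine Finset.sum_congr rfl fun σ _ => ?_
    rw [show ((Equiv.Perm.sign σ : ℤ) : MvPolynomial (Fin 2) ℂ)
        = C (((Equiv.Perm.sign σ : ℤ) : ℂ)) from (map_intCast (C : ℂ →+* _) _).symm,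
      coeff_C_mul]
  -- the identity permutation product
  have hprod_id : (∏ i, Mmat ((1 : Equiv.Perm (Fin l)) i) i)
      = X 0 * ∏ i ∈ Finset.univ.erase a0, (X 0 - C (cf i)) := by
    simp only [Equiv.Perm.coe_one, id_eq, hdiag]
    rw [← Finset.mul_prod_erase Finset.univ _ (Finset.mem_univ a0), hcfa0]
    simp
  have hconst_erase : ∀ s : Finset (Fin l),
      constantCoeff (∏ i ∈ s, (X 0 - C (cf i))) = ∏ i ∈ s, (-(cf i)) := by
    intro s
    rw [map_prod]
    exact Finset.prod_congr rfl fun i _ => by simp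
  -- coeff (single 0 1) of det
  have hu : coeff (Finsupp.single (0 : Fin 2) 1) Mmat.det = cc := by
    rw [key]
    rw [Finset.sum_eq_single (1 : Equiv.Perm (Fin l))]
    · rw [hprod_id, coeff_X_mul', if_pos (by simp), single01_sub, ← constantCoeff_eq]
      simp only [Equiv.Perm.sign_one, Units.val_one, Int.cast_one, one_mul]
      rw [map_prod, hccdef]
      exact Finset.prod_congr rfl fun i _ => by simp
    · intro σ _ hσ
      have h2 : 1 < σ.support.card := Equiv.Perm.one_lt_card_support_of_ne_one hσ
      rw [coeff_eq_zero_of_dvd (dvd_prod_perm Mmat hdvd σ)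
        (by
          have h0 : (Finsupp.single (0 : Fin 2) 1) (1 : Fin 2) = 0 := by
            simp [Finsupp.single_apply]
          rw [h0]; omega), mul_zero]
    · intro h; exact absurd (Finset.mem_univ _) h
  -- swap products other than swap a0 a1 don't contribute to coeff (single 1 2)
  have hswap0 : ∀ p q : Fin l, (p : ℕ) < (q : ℕ) → Equiv.swap p q ≠ Equiv.swap a0 a1 →
      coeff (Finsupp.single (1 : Fin 2) 2) (∏ i, Mmat (Equiv.swap p q i) i) = 0 := by
    intro p q hpq hne
    have hpq' : p ≠ q := fun e => by rw [e] at hpq; omega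
    rw [prod_swap_eq Mmat hpq']
    by_cases hadj : (p : ℕ) + 1 = (q : ℕ)
    · have hq : Mmat q p = X 1 * C (((l - (q : ℕ) : ℕ)) : ℂ) := by
        simp only [hMmat, Matrix.of_apply]
        rw [if_neg (by omega), if_neg (by omega), if_pos hadj]
      have hp : Mmat p q = X 1 * C ((((p : ℕ) + 1 : ℕ)) : ℂ) := by
        simp only [hMmat, Matrix.of_apply]
        rw [if_neg (by omega), if_pos hadj]
      have hp0 : (p : ℕ) ≠ 0 := by
        intro h0
        apply hne
        have hqe : q = a1 := Fin.ext (by show (q:ℕ) = 1; omega)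
        have hpe : p = a0 := Fin.ext (by show (p:ℕ) = 0; omega)
        rw [hpe, hqe]
      have ha0mem : a0 ∈ (Finset.univ.erase p).erase q := by
        refine Finset.mem_erase.mpr ⟨fun e => ?_, Finset.mem_erase.mpr ⟨fun e => ?_,
          Finset.mem_univ _⟩⟩
        · have := congrArg Fin.val e; simp [ha0] at this; omega
        · have := congrArg Fin.val e; simp [ha0] at this; omega
      rw [hq, hp]
      have hre : (X 1 * C (((l - (q : ℕ) : ℕ)) : ℂ))
          * ((X 1 * C ((((p : ℕ) + 1 : ℕ)) : ℂ))
            * ∏ i ∈ (Finset.univ.erase p).erase q, Mmat i i)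
          = ((C (((l - (q : ℕ) : ℕ)) : ℂ) * C ((((p : ℕ) + 1 : ℕ)) : ℂ)
            * ∏ i ∈ (Finset.univ.erase p).erase q, Mmat i i) * X 1) * X 1 := by ring
      rw [hre, coeff_mul_X', if_pos (by simp), single12_sub, coeff_mul_X', if_pos (by simp),
        single11_sub, ← constantCoeff_eq, _root_.map_mul, _root_.map_mul]
      have hR : constantCoeff (∏ i ∈ (Finset.univ.erase p).erase q, Mmat i i) = 0 := by
        rw [map_prod]
        refine Finset.prod_eq_zero ha0mem ?_
        rw [hdiag, map_sub, constantCoeff_X, constantCoeff_C, hcfa0]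
        ring
      rw [hR, mul_zero]
    · have hzero : Mmat q p = 0 := by
        simp only [hMmat, Matrix.of_apply]
        rw [if_neg (by omega), if_neg (by omega), if_neg (by omega)]
      rw [hzero, zero_mul, coeff_zero]
  -- coeff (single 1 2) of det
  have hv : coeff (Finsupp.single (1 : Fin 2) 2) Mmat.det = cc := by
    rw [key]
    rw [Finset.sum_eq_single (Equiv.swap a0 a1)]
    · rw [Equiv.Perm.sign_swap ha01, prod_swap_eq Mmat ha01]
      have h10 : Mmat a1 a0 = X 1 * C ((l - 1 : ℕ) : ℂ) := by
        simp only [hMmat, Matrix.of_apply, ha0, ha1]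
        norm_num
      have h01 : Mmat a0 a1 = X 1 * C ((1 : ℕ) : ℂ) := by
        simp only [hMmat, Matrix.of_apply, ha0, ha1]
        norm_num
      rw [h10, h01]
      have hre : (X 1 * C ((l - 1 : ℕ) : ℂ))
          * ((X 1 * C ((1 : ℕ) : ℂ))
            * ∏ i ∈ (Finset.univ.erase a0).erase a1, Mmat i i)
          = ((C ((l - 1 : ℕ) : ℂ) * C ((1 : ℕ) : ℂ)
            * ∏ i ∈ (Finset.univ.erase a0).erase a1, Mmat i i) * X 1) * X 1 := by ring
      rw [hre, coeff_mul_X', if_pos (by simp), single12_sub, coeff_mul_X', if_pos (by simp),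
        single11_sub, ← constantCoeff_eq, _root_.map_mul, _root_.map_mul]
      have hR : constantCoeff (∏ i ∈ (Finset.univ.erase a0).erase a1, Mmat i i)
          = ∏ i ∈ (Finset.univ.erase a0).erase a1, (-(cf i)) := by
        rw [map_prod]
        exact Finset.prod_congr rfl fun i _ => by rw [hdiag]; simp
      rw [hR]
      have hcc2 : cc = (-(cf a1)) * ∏ i ∈ (Finset.univ.erase a0).erase a1, (-(cf i)) := by
        rw [hccdef, ← Finset.mul_prod_erase _ _
          (Finset.mem_erase.mpr ⟨ha01.symm, Finset.mem_univ a1⟩)]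
      rw [hcc2, hcfa1]
      simp only [constantCoeff_C]
      push_cast
      ring
    · intro σ _ hσne
      by_cases h1 : σ = 1
      · subst h1
        rw [hprod_id, coeff_X_mul', if_neg (by simp [Finsupp.single_apply]), mul_zero]
      by_cases h2 : σ.IsSwap
      · obtain ⟨p, q, hpq, rfl⟩ := h2
        have hvne : (p : ℕ) ≠ (q : ℕ) := fun e => hpq (Fin.ext e)
        rcases Nat.lt_or_ge (p : ℕ) (q : ℕ) with h | h
        · rw [hswap0 p q h hσne, mul_zero]
        · have hlt : (q : ℕ) < (p : ℕ) := by omega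
          rw [Equiv.swap_comm] at hσne ⊢
          rw [hswap0 q p hlt hσne, mul_zero]
      · have h3 : 3 ≤ σ.support.card := by
          have hne1 : σ.support.card ≠ 1 := Equiv.Perm.card_support_ne_one σ
          have hne0 : σ.support.card ≠ 0 := by
            intro h0
            exact h1 (Equiv.Perm.support_eq_empty_iff.mp (Finset.card_eq_zero.mp h0))
          have hne2 : σ.support.card ≠ 2 := fun h => h2 (Equiv.Perm.card_support_eq_two.mp h)
          omega
        rw [coeff_eq_zero_of_dvd (dvd_prod_perm Mmat hdvd σ)
          (by rw [Finsupp.single_eq_same]; omega), mul_zero]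
    · intro h; exact absurd (Finset.mem_univ _) h
  -- assemble
  refine ⟨cc, hccne, ?_, ?_, ?_⟩
  · have t0 := transfer P 0 0
    simp only [Finsupp.single_zero, mul_zero, zero_add, add_zero] at t0
    rw [constantCoeff_eq, ← t0, ← hP, ← constantCoeff_eq]
    exact hdet0
  · have t1 := transfer P 1 0
    simp only [Finsupp.single_zero, mul_zero, add_zero] at t1
    rw [← t1, ← hP]
    exact hu
  · have t2 := transfer P 0 1
    simp only [Finsupp.single_zero, zero_add, mul_one] at t2
    rw [← t2, ← hP]
    exact hv
end
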